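/- arXiv:1106.2755 — 6 statements merged into one kernel-verified Lean document; each statement's English description precedes it below -/
import Mathlib

section
/- Let E be a vector lattice, f a positive linear functional on E, and 𝒫 a set of band projections on the order dual E~ such that for every x ∈ E, f(x⁺) = sup { (p f)(x) : p ∈ 𝒫 }. Then every g with 0 ≤ g ≤ f satisfying inf_{p ∈ 𝒫} ( (p^⊥ g)(x) + (p (f − g))(x) ) = 0 for all x ≥ 0 is a fragment of f, i.e., g ∧ (f − g) = 0. -/
/-- Disjointness of two positive linear functionals on a vector lattice. -/
def DisjointFunc {E : Type*} [Lattice E] [AddCommGroup E] [Module ℝ E]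
    (u v : E →ₗ[ℝ] ℝ) : Prop :=
  ∀ h : E →ₗ[ℝ] ℝ, (∀ x, 0 ≤ x → 0 ≤ h x) → (∀ x, 0 ≤ x → h x ≤ u x) →
    (∀ x, 0 ≤ x → h x ≤ v x) → h = 0

/-- A band projection on the functionals: a linear idempotent `p` with `0 ≤ p ≤ Id`. -/
def IsBandProj {E : Type*} [Lattice E] [AddCommGroup E] [Module ℝ E]
    (p : (E →ₗ[ℝ] ℝ) →ₗ[ℝ] (E →ₗ[ℝ] ℝ)) : Prop :=
  p ∘ₗ p = p ∧
  ∀ u : E →ₗ[ℝ] ℝ, (∀ x, 0 ≤ x → 0 ≤ u x) →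
    ∀ x, 0 ≤ x → 0 ≤ (p u) x ∧ (p u) x ≤ u x

/-- If `Ps` generates the fragments of `f` and
`inf_{p ∈ Ps} (p^⊥ g (x) + p (f - g) (x)) = 0` for all `x ≥ 0`, then `g` is a
fragment of `f`. -/
theorem stmt4 {E : Type*} [Lattice E] [AddCommGroup E] [Module ℝ E]
    [CovariantClass E E (· + ·) (· ≤ ·)]
    (f g : E →ₗ[ℝ] ℝ) (hf : ∀ x, 0 ≤ x → 0 ≤ f x)
    (hg : ∀ x, 0 ≤ x → 0 ≤ g x) (hgf : ∀ x, 0 ≤ x → g x ≤ f x)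
    (Ps : Set ((E →ₗ[ℝ] ℝ) →ₗ[ℝ] (E →ₗ[ℝ] ℝ)))
    (hPs : ∀ p ∈ Ps, IsBandProj p)
    (hgen : ∀ x : E, IsLUB {r : ℝ | ∃ p ∈ Ps, r = (p f) x} (f (x ⊔ 0)))
    (hinf : ∀ x, 0 ≤ x →
      IsGLB {r : ℝ | ∃ p ∈ Ps, r = (g - p g) x + (p (f - g)) x} 0) :
    DisjointFunc g (f - g) := by
  intro h hpos hhg hhfg
  have key : ∀ x, 0 ≤ x → h x = 0 := by
    intro x hx
    have hlb : h x ∈ lowerBounds {r : ℝ | ∃ p ∈ Ps, r = (g - p g) x + (p (f - g)) x} := by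
      rintro r ⟨p, hp, rfl⟩
      obtain ⟨-, hpb⟩ := hPs p hp
      have h1 : ∀ x', 0 ≤ x' → 0 ≤ (f - g - h) x' := by
        intro x' hx'
        have := hhfg x' hx'
        simp only [LinearMap.sub_apply] at this ⊢
        linarith
      have h2 : ∀ x', 0 ≤ x' → 0 ≤ (g - h) x' := by
        intro x' hx'
        have := hhg x' hx'
        simp only [LinearMap.sub_apply]
        linarith
      have e1 := (hpb (f - g - h) h1 x hx).1
      have e2 := (hpb (g - h) h2 x hx).2
      rw [map_sub] at e1 e2
      simp only [LinearMap.sub_apply] at e1 e2 ⊢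
      linarith
    have hle : h x ≤ 0 := (hinf x hx).2 hlb
    exact le_antisymm hle (hpos x hx)
  ext x
  have hx : x = (x ⊔ 0) - ((-x) ⊔ 0) := by
    have := posPart_sub_negPart x
    simpa [posPart, negPart] using this.symm
  calc h x = h (x ⊔ 0) - h ((-x) ⊔ 0) := by rw [← map_sub]; exact congrArg h hx
    _ = 0 := by rw [key _ le_sup_right, key _ le_sup_right]; simp
end

section
/- Let E be a vector lattice, f a positive linear functional on E, and 𝒫 a set of band projections on E~ generating the fragments of f. If g with 0 ≤ g ≤ f is a fragment of f, then inf { |p f − g|(x) : p ∈ 𝒫 } = 0 for every x ≥ 0 in E. -/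
section Aux

variable {E : Type*} [Lattice E] [AddCommGroup E] [Module ℝ E]
    [CovariantClass E E (· + ·) (· ≤ ·)]

private lemma mono_of_pos (u : E →ₗ[ℝ] ℝ) (hu : ∀ x, 0 ≤ x → 0 ≤ u x)
    {a b : E} (h : a ≤ b) : u a ≤ u b := by
  have h1 := hu (b - a) (by simpa using h)
  have h2 : u (b - a) = u b - u a := map_sub u b a
  linarith

private lemma riesz_decomp {a b y : E} (ha : 0 ≤ a) (hb : 0 ≤ b) (hy0 : 0 ≤ y)
    (hy : y ≤ a + b) :
    ∃ y₁ y₂, 0 ≤ y₁ ∧ y₁ ≤ a ∧ 0 ≤ y₂ ∧ y₂ ≤ b ∧ y = y₁ + y₂ := by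
  refine ⟨y ⊓ a, y - y ⊓ a, le_inf hy0 ha, inf_le_right,
    sub_nonneg.mpr inf_le_left, ?_, by abel⟩
  rw [sub_inf y a y]
  exact sup_le (by simpa using hb) (sub_le_iff_le_add'.mpr hy)

private lemma posneg (x : E) : (x ⊔ 0) - ((-x) ⊔ 0) = x := by
  rw [← posPart_def, ← negPart_def]; exact posPart_sub_negPart x

private lemma posPart_le_abs' (x : E) : (x ⊔ 0) ≤ |x| := by
  have h := posPart_add_negPart x
  rw [← posPart_def] at *
  calc x⁺ = x⁺ + 0 := by rw [add_zero]
    _ ≤ x⁺ + x⁻ := by gcongr; exact negPart_nonneg x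
    _ = |x| := h

private lemma negPart_le_abs' (x : E) : ((-x) ⊔ 0) ≤ |x| := by
  have h := posPart_add_negPart x
  rw [← negPart_def]
  calc x⁻ = 0 + x⁻ := by rw [zero_add]
    _ ≤ x⁺ + x⁻ := by gcongr; exact posPart_nonneg x
    _ = |x| := h

private noncomputable def mfun (f g : E →ₗ[ℝ] ℝ) (x : E) : ℝ :=
  sInf {r | ∃ y, 0 ≤ y ∧ y ≤ x ∧ r = g (x - y) + (f y - g y)}

private lemma mfun_eq (f g : E →ₗ[ℝ] ℝ) (x : E) :
    mfun f g x = sInf {r | ∃ y, 0 ≤ y ∧ y ≤ x ∧ r = g (x - y) + (f y - g y)} := rfl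

variable (f g : E →ₗ[ℝ] ℝ)
    (hg : ∀ x, 0 ≤ x → 0 ≤ g x) (hF : ∀ x, 0 ≤ x → g x ≤ f x)

private lemma mset_nonempty {x : E} (hx : 0 ≤ x) :
    {r | ∃ y, 0 ≤ y ∧ y ≤ x ∧ r = g (x - y) + (f y - g y)}.Nonempty :=
  ⟨g (x - 0) + (f 0 - g 0), 0, le_refl 0, hx, rfl⟩

include hg hF in
private lemma mset_bdd (x : E) :
    BddBelow {r | ∃ y, 0 ≤ y ∧ y ≤ x ∧ r = g (x - y) + (f y - g y)} := by
  refine ⟨0, ?_⟩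
  rintro r ⟨y, hy0, hyx, rfl⟩
  have h1 : 0 ≤ g (x - y) := hg _ (by simpa using hyx)
  have h2 : g y ≤ f y := hF y hy0
  linarith

include hg hF in
private lemma mfun_nonneg {x : E} (hx : 0 ≤ x) : 0 ≤ mfun f g x :=
  le_csInf (mset_nonempty f g hx) (by
    rintro r ⟨y, hy0, hyx, rfl⟩
    have h1 : 0 ≤ g (x - y) := hg _ (by simpa using hyx)
    have h2 : g y ≤ f y := hF y hy0
    linarith)

include hg hF in
private lemma mfun_le_g {x : E} (hx : 0 ≤ x) : mfun f g x ≤ g x := by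
  have h : g (x - 0) + (f 0 - g 0) = g x := by simp
  rw [mfun_eq, ← h]
  exact csInf_le (mset_bdd f g hg hF x) ⟨0, le_refl 0, hx, rfl⟩

include hg hF in
private lemma mfun_le_F {x : E} (hx : 0 ≤ x) : mfun f g x ≤ f x - g x := by
  have h : g (x - x) + (f x - g x) = f x - g x := by simp
  rw [mfun_eq, ← h]
  exact csInf_le (mset_bdd f g hg hF x) ⟨x, hx, le_refl x, rfl⟩

private lemma mfun_zero : mfun f g 0 = 0 := by
  have h : {r | ∃ y, 0 ≤ y ∧ y ≤ (0:E) ∧ r = g (0 - y) + (f y - g y)} = {0} := by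
    ext r
    constructor
    · rintro ⟨y, hy0, hy1, rfl⟩
      have : y = 0 := le_antisymm hy1 hy0
      subst this; simp
    · rintro rfl
      exact ⟨0, le_refl 0, le_refl 0, by simp⟩
  rw [mfun_eq, h, csInf_singleton]

include hg hF in
private lemma mfun_add {a b : E} (ha : 0 ≤ a) (hb : 0 ≤ b) :
    mfun f g (a + b) = mfun f g a + mfun f g b := by
  have hab : 0 ≤ a + b := add_nonneg ha hb
  apply le_antisymm
  · have key : ∀ ra ∈ {r | ∃ y, 0 ≤ y ∧ y ≤ a ∧ r = g (a - y) + (f y - g y)},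
        ∀ rb ∈ {r | ∃ y, 0 ≤ y ∧ y ≤ b ∧ r = g (b - y) + (f y - g y)},
        mfun f g (a + b) ≤ ra + rb := by
      rintro ra ⟨ya, hya0, hyaa, rfl⟩ rb ⟨yb, hyb0, hybb, rfl⟩
      have mem : g (a - ya) + (f ya - g ya) + (g (b - yb) + (f yb - g yb)) ∈
          {r | ∃ y, 0 ≤ y ∧ y ≤ a + b ∧ r = g (a + b - y) + (f y - g y)} := by
        refine ⟨ya + yb, add_nonneg hya0 hyb0, add_le_add hyaa hybb, ?_⟩
        have e : a + b - (ya + yb) = (a - ya) + (b - yb) := by abel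
        rw [e, map_add, map_add g, map_add f]
        ring
      exact csInf_le (mset_bdd f g hg hF (a + b)) mem
    have step1 : ∀ ra ∈ {r | ∃ y, 0 ≤ y ∧ y ≤ a ∧ r = g (a - y) + (f y - g y)},
        mfun f g (a + b) - ra ≤ mfun f g b := by
      intro ra hra
      exact le_csInf (mset_nonempty f g hb) (fun rb hrb => by
        have := key ra hra rb hrb; linarith)
    have step2 : mfun f g (a + b) - mfun f g b ≤ mfun f g a :=
      le_csInf (mset_nonempty f g ha) (fun ra hra => by
        have := step1 ra hra; linarith)
    linarith
  · refine le_csInf (mset_nonempty f g hab) ?_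
    rintro r ⟨y, hy0, hy, rfl⟩
    obtain ⟨y₁, y₂, h10, h1a, h20, h2b, rfl⟩ := riesz_decomp ha hb hy0 hy
    have e : a + b - (y₁ + y₂) = (a - y₁) + (b - y₂) := by abel
    have v1 : mfun f g a ≤ g (a - y₁) + (f y₁ - g y₁) :=
      csInf_le (mset_bdd f g hg hF a) ⟨y₁, h10, h1a, rfl⟩
    have v2 : mfun f g b ≤ g (b - y₂) + (f y₂ - g y₂) :=
      csInf_le (mset_bdd f g hg hF b) ⟨y₂, h20, h2b, rfl⟩
    rw [e, map_add g, map_add g, map_add f]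
    linarith

private noncomputable def hone (f g : E →ₗ[ℝ] ℝ) (x : E) : ℝ :=
  mfun f g (x ⊔ 0) - mfun f g ((-x) ⊔ 0)

include hg hF in
private lemma hone_rep {a b : E} (ha : 0 ≤ a) (hb : 0 ≤ b) :
    hone f g (a - b) = mfun f g a - mfun f g b := by
  set c := a - b with hc
  have hid : (c ⊔ 0) - ((-c) ⊔ 0) = a - b := by rw [posneg]
  have e : (c ⊔ 0) + b = a + ((-c) ⊔ 0) := sub_eq_sub_iff_add_eq_add.mp hid
  have h1 : mfun f g ((c ⊔ 0) + b) = mfun f g (c ⊔ 0) + mfun f g b :=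
    mfun_add f g hg hF le_sup_right hb
  have h2 : mfun f g (a + ((-c) ⊔ 0)) = mfun f g a + mfun f g ((-c) ⊔ 0) :=
    mfun_add f g hg hF ha le_sup_right
  rw [e] at h1
  rw [hone]
  linarith

include hg hF in
private lemma hone_add (u v : E) :
    hone f g (u + v) = hone f g u + hone f g v := by
  have e : u + v = ((u ⊔ 0) + (v ⊔ 0)) - (((-u) ⊔ 0) + ((-v) ⊔ 0)) := by
    have : ((u ⊔ 0) + (v ⊔ 0)) - (((-u) ⊔ 0) + ((-v) ⊔ 0)) =
        ((u ⊔ 0) - ((-u) ⊔ 0)) + ((v ⊔ 0) - ((-v) ⊔ 0)) := by abel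
    rw [this, posneg, posneg]
  have h1 : hone f g (u + v) =
      mfun f g ((u ⊔ 0) + (v ⊔ 0)) - mfun f g (((-u) ⊔ 0) + ((-v) ⊔ 0)) := by
    rw [e]
    exact hone_rep f g hg hF (add_nonneg le_sup_right le_sup_right)
      (add_nonneg le_sup_right le_sup_right)
  rw [h1, mfun_add f g hg hF le_sup_right le_sup_right,
    mfun_add f g hg hF le_sup_right le_sup_right, hone, hone]
  ring

include hg hF in
private lemma hone_smul (hf : ∀ x, 0 ≤ x → 0 ≤ f x)
    (hA : ∀ z : E, ∀ t : ℝ, 0 < t → f ((t • z) ⊔ 0) = t * f (z ⊔ 0))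
    (c : ℝ) (z : E) :
    hone f g (c • z) = c * hone f g z := by
  set C := f (z ⊔ 0) + f ((-z) ⊔ 0) with hCdef
  have hC : 0 ≤ C := add_nonneg (hf _ le_sup_right) (hf _ le_sup_right)
  have hmb : ∀ w : E, 0 ≤ w → mfun f g w ≤ f w := fun w hw =>
    le_trans (mfun_le_g f g hg hF hw) (hF w hw)
  have key : ∀ t : ℝ, 0 < t → |hone f g (t • z)| ≤ t * C := by
    intro t ht
    have e1 : f ((t • z) ⊔ 0) = t * f (z ⊔ 0) := hA z t ht
    have e2 : f ((-(t • z)) ⊔ 0) = t * f ((-z) ⊔ 0) := by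
      have hne : -(t • z) = t • (-z) := (smul_neg t z).symm
      rw [hne]; exact hA (-z) t ht
    have b1 : 0 ≤ mfun f g ((t • z) ⊔ 0) := mfun_nonneg f g hg hF le_sup_right
    have b2 : mfun f g ((t • z) ⊔ 0) ≤ t * f (z ⊔ 0) := e1 ▸ hmb _ le_sup_right
    have b3 : 0 ≤ mfun f g ((-(t • z)) ⊔ 0) := mfun_nonneg f g hg hF le_sup_right
    have b4 : mfun f g ((-(t • z)) ⊔ 0) ≤ t * f ((-z) ⊔ 0) := e2 ▸ hmb _ le_sup_right
    have p1 : 0 ≤ t * f (z ⊔ 0) := mul_nonneg ht.le (hf _ le_sup_right)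
    have p2 : 0 ≤ t * f ((-z) ⊔ 0) := mul_nonneg ht.le (hf _ le_sup_right)
    have hCt : t * C = t * f (z ⊔ 0) + t * f ((-z) ⊔ 0) := by rw [hCdef]; ring
    rw [hone, abs_le]
    constructor <;> linarith
  set Φ : ℝ →+ ℝ := AddMonoidHom.mk' (fun t => hone f g (t • z))
    (fun s t => by
      show hone f g ((s + t) • z) = hone f g (s • z) + hone f g (t • z)
      rw [add_smul]; exact hone_add f g hg hF _ _) with hPhi
  have hΦ : ∀ t : ℝ, Φ t = hone f g (t • z) := fun t => rfl
  have hrat : ∀ q : ℚ, Φ (q : ℝ) = (q : ℝ) * Φ 1 := by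
    intro q
    have := map_ratCast_smul Φ ℝ ℝ q (1 : ℝ)
    simpa [smul_eq_mul] using this
  have main : Φ c = c * Φ 1 := by
    have hbd : ∀ η : ℝ, 0 < η → |Φ c - c * Φ 1| ≤ η * (C + |Φ 1|) := by
      intro η hη
      obtain ⟨q, hq1, hq2⟩ := exists_rat_btwn (show c - η < c by linarith)
      have hd0 : (0:ℝ) < c - q := by linarith
      have hdη : c - (q:ℝ) ≤ η := by linarith
      have h1 : Φ c - Φ q = Φ (c - q) := (map_sub Φ c q).symm
      have h2 : |Φ (c - (q:ℝ))| ≤ (c - q) * C := by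
        rw [hΦ]; exact key (c - q) hd0
      have h3 : Φ c - c * Φ 1 = Φ (c - (q:ℝ)) + ((q : ℝ) - c) * Φ 1 := by
        rw [← h1, hrat q]; ring
      rw [h3]
      have h4 : |((q:ℝ) - c) * Φ 1| = (c - (q:ℝ)) * |Φ 1| := by
        rw [abs_mul, abs_of_neg (by linarith : (q:ℝ) - c < 0)]; ring
      calc |Φ (c - (q:ℝ)) + ((q:ℝ) - c) * Φ 1|
          ≤ |Φ (c - (q:ℝ))| + |((q:ℝ) - c) * Φ 1| := abs_add_le _ _
        _ ≤ (c - q) * C + (c - (q:ℝ)) * |Φ 1| := by rw [h4]; linarith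
        _ ≤ η * (C + |Φ 1|) := by nlinarith [abs_nonneg (Φ 1)]
    have h0 : |Φ c - c * Φ 1| ≤ 0 := by
      by_contra hcon
      push_neg at hcon
      set D := |Φ c - c * Φ 1| with hD
      set K := C + |Φ 1| with hK
      have hK0 : 0 ≤ K := add_nonneg hC (abs_nonneg _)
      have hb := hbd (D / (2 * (K + 1))) (by positivity)
      rw [div_mul_eq_mul_div] at hb
      have : D * K / (2 * (K + 1)) < D := by
        rw [div_lt_iff₀ (by linarith)]
        nlinarith
      linarith
    have := abs_nonneg (Φ c - c * Φ 1)
    have hz : Φ c - c * Φ 1 = 0 := by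
      have : |Φ c - c * Φ 1| = 0 := le_antisymm h0 this
      exact abs_eq_zero.mp this
    linarith
  have h2 : Φ 1 = hone f g z := by rw [hΦ, one_smul]
  rw [← hΦ, main, h2]

end Aux

/-- If `Ps` generates the fragments of `f` and `g` is a fragment of `f`, then
`inf { |p f - g|(x) : p ∈ Ps } = 0` for every `x ≥ 0`, where
`|u|(x) = sup { u y : |y| ≤ x }` is the Riesz–Kantorovich modulus. -/
theorem stmt5 {E : Type*} [Lattice E] [AddCommGroup E] [Module ℝ E]
    [CovariantClass E E (· + ·) (· ≤ ·)]
    (f g : E →ₗ[ℝ] ℝ) (hf : ∀ x, 0 ≤ x → 0 ≤ f x)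
    (hg : ∀ x, 0 ≤ x → 0 ≤ g x) (hgf : ∀ x, 0 ≤ x → g x ≤ f x)
    (Ps : Set ((E →ₗ[ℝ] ℝ) →ₗ[ℝ] (E →ₗ[ℝ] ℝ)))
    (hPs : ∀ p ∈ Ps, IsBandProj p)
    (hgen : ∀ x : E, IsLUB {r : ℝ | ∃ p ∈ Ps, r = (p f) x} (f (x ⊔ 0)))
    (hfrag : DisjointFunc g (f - g)) :
    ∀ x, 0 ≤ x →
      IsGLB {r : ℝ | ∃ p ∈ Ps,
        IsLUB {s : ℝ | ∃ y, |y| ≤ x ∧ s = (p f - g) y} r} 0 := by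
  -- positivity of f - g
  have hFpos : ∀ v : E, 0 ≤ v → 0 ≤ (f - g) v := by
    intro v hv
    have := hgf v hv
    simp only [LinearMap.sub_apply]
    linarith
  -- Lemma A: hgen forces positive homogeneity of f on positive parts
  have hA : ∀ z : E, ∀ t : ℝ, 0 < t → f ((t • z) ⊔ 0) = t * f (z ⊔ 0) := by
    intro z t ht
    have h1 := hgen z
    have h2 := hgen (t • z)
    have hs : {r : ℝ | ∃ p ∈ Ps, r = (p f) (t • z)} =
        {r : ℝ | ∃ p ∈ Ps, r = t * (p f) z} := by
      ext r
      constructor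
      · rintro ⟨p, hp, rfl⟩; exact ⟨p, hp, by rw [map_smul, smul_eq_mul]⟩
      · rintro ⟨p, hp, rfl⟩; exact ⟨p, hp, by rw [map_smul, smul_eq_mul]⟩
    rw [hs] at h2
    have h3 : IsLUB {r : ℝ | ∃ p ∈ Ps, r = t * (p f) z} (t * f (z ⊔ 0)) := by
      constructor
      · rintro r ⟨p, hp, rfl⟩
        exact mul_le_mul_of_nonneg_left (h1.1 ⟨p, hp, rfl⟩) ht.le
      · intro b hb
        have hub : f (z ⊔ 0) ≤ b / t := by
          refine h1.2 ?_
          rintro r ⟨p, hp, rfl⟩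
          have := hb ⟨p, hp, rfl⟩
          rw [le_div_iff₀ ht]
          linarith [this, mul_comm t ((p f) z)]
        calc t * f (z ⊔ 0) ≤ t * (b / t) := mul_le_mul_of_nonneg_left hub ht.le
          _ = b := by field_simp
    exact h2.unique h3
  -- the linear functional g ∧ (f - g)
  set H : E →ₗ[ℝ] ℝ :=
    { toFun := hone f g
      map_add' := hone_add f g hg hgf
      map_smul' := fun c z => by
        simpa [smul_eq_mul] using hone_smul f g hg hgf hf hA c z } with hHdef
  have hHx : ∀ x : E, 0 ≤ x → H x = mfun f g x := by
    intro x hx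
    have e1 : x ⊔ 0 = x := sup_eq_left.mpr hx
    have e2 : (-x) ⊔ 0 = (0:E) := sup_eq_right.mpr (neg_nonpos.mpr hx)
    show hone f g x = mfun f g x
    rw [hone, e1, e2, mfun_zero]
    ring
  have hH0 : H = 0 := by
    refine hfrag H ?_ ?_ ?_
    · intro x hx; rw [hHx x hx]; exact mfun_nonneg f g hg hgf hx
    · intro x hx; rw [hHx x hx]; exact mfun_le_g f g hg hgf hx
    · intro x hx
      rw [hHx x hx]
      have := mfun_le_F f g hg hgf hx
      simp only [LinearMap.sub_apply]
      linarith
  have hm0 : ∀ x : E, 0 ≤ x → mfun f g x = 0 := by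
    intro x hx
    have : H x = 0 := by rw [hH0]; rfl
    rw [hHx x hx] at this
    exact this
  -- approximation from disjointness
  have approx : ∀ x : E, 0 ≤ x → ∀ δ : ℝ, 0 < δ →
      ∃ y, 0 ≤ y ∧ y ≤ x ∧ g (x - y) + (f y - g y) < δ := by
    intro x hx δ hδ
    have hlt : sInf {r | ∃ y, 0 ≤ y ∧ y ≤ x ∧ r = g (x - y) + (f y - g y)} < δ := by
      rw [← mfun_eq, hm0 x hx]; exact hδ
    obtain ⟨r, ⟨y, hy0, hyx, rfl⟩, hrδ⟩ :=
      exists_lt_of_csInf_lt (mset_nonempty f g hx) hlt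
    exact ⟨y, hy0, hyx, hrδ⟩
  -- main argument
  intro x hx
  constructor
  · rintro r ⟨p, hp, hlub⟩
    refine hlub.1 ⟨0, by simpa using hx, by simp⟩
  · intro b hb
    have hble : ∀ ε : ℝ, 0 < ε → b ≤ ε := by
      intro ε hε
      obtain ⟨y, hy0, hyx, hval⟩ := approx x hx (ε/8) (by positivity)
      set w := x - y with hwdef
      have hw0 : 0 ≤ w := sub_nonneg.mpr hyx
      have hxyw : x = y + w := by rw [hwdef]; abel
      have hgw0 : 0 ≤ g w := hg w hw0
      have hFy0 : 0 ≤ f y - g y := by linarith [hgf y hy0]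
      have hgw : g w < ε/8 := by linarith
      have hFy : f y - g y < ε/8 := by linarith
      set z := y - w with hzdef
      have hz : y - (z ⊔ 0) = w ⊓ y := by
        rw [hzdef, sub_sup (y - w) 0 y, sub_sub_cancel, sub_zero]
      have hwy0 : 0 ≤ w ⊓ y := le_inf hw0 hy0
      have hfwy : f (w ⊓ y) < ε/8 := by
        have h1 : g (w ⊓ y) ≤ g w := mono_of_pos g hg inf_le_left
        have h2 : (f - g) (w ⊓ y) ≤ (f - g) y := mono_of_pos (f - g) hFpos inf_le_right
        simp only [LinearMap.sub_apply] at h2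
        linarith
      -- choose p
      obtain ⟨p, hp, hpz⟩ : ∃ p ∈ Ps, f (z ⊔ 0) - ε/8 < (p f) z := by
        by_contra hcon
        push_neg at hcon
        have : f (z ⊔ 0) ≤ f (z ⊔ 0) - ε/8 := by
          refine (hgen z).2 ?_
          rintro r ⟨p, hp, rfl⟩
          exact hcon p hp
        linarith
      have hPp := (hPs p hp).2
      have hpf := hPp f hf
      have hpg := hPp g hg
      have hpF := hPp (f - g) hFpos
      have hzval : (p f) z = (p f) y - (p f) w := by rw [hzdef, map_sub]
      have hfz : f y - ε/8 < f (z ⊔ 0) := by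
        have hzc : f y - f (z ⊔ 0) = f (w ⊓ y) := by rw [← map_sub, hz]
        linarith
      have hpfy_le : (p f) y ≤ f y := (hpf y hy0).2
      have hpfw_nn : 0 ≤ (p f) w := (hpf w hw0).1
      have hpfz : f y - ε/4 < (p f) z := by linarith
      have hpfw : (p f) w < ε/4 := by
        have : (p f) w = (p f) y - (p f) z := by linarith [hzval]
        linarith
      have hpfy : f y - ε/4 < (p f) y := by rw [hzval] at hpfz; linarith
      -- pF and pg relations
      have hpFsub : ∀ v : E, (p (f - g)) v = (p f) v - (p g) v := by
        intro v
        rw [map_sub]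
        simp only [LinearMap.sub_apply]
      have hpgy : g y - (3*ε/8) < (p g) y := by
        have h1 : (p (f - g)) y ≤ (f - g) y := (hpF y hy0).2
        simp only [LinearMap.sub_apply] at h1
        have h2 := hpFsub y
        have h3 := hgf y hy0
        linarith
      -- bound B
      have hBF : (p (f - g)) x < 3*ε/8 := by
        have hsplit : (p (f - g)) x = (p (f - g)) y + (p (f - g)) w := by
          rw [hxyw, map_add]
        have h1 : (p (f - g)) y ≤ (f - g) y := (hpF y hy0).2
        simp only [LinearMap.sub_apply] at h1
        have h2 : (p (f - g)) w ≤ (p f) w := by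
          have := hpFsub w
          linarith [(hpg w hw0).1]
        linarith
      have hBg : g x - (p g) x < ε/2 := by
        have hs1 : g x = g y + g w := by rw [hxyw, map_add]
        have hs2 : (p g) x = (p g) y + (p g) w := by rw [hxyw, map_add]
        linarith [(hpg w hw0).1, hpgy, hgw]
      set B := (p (f - g)) x + (g x - (p g) x) with hBdef
      have hBε : B < 7*ε/8 := by rw [hBdef]; linarith
      -- B is an upper bound of the modulus set
      have hub : ∀ s ∈ {s : ℝ | ∃ y', |y'| ≤ x ∧ s = (p f - g) y'}, s ≤ B := by
        rintro s ⟨y', hy', rfl⟩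
        set a := y' ⊔ 0 with hadef
        set b' := (-y') ⊔ 0 with hbdef'
        have hab : y' = a - b' := (posneg y').symm
        have ha0 : (0:E) ≤ a := le_sup_right
        have hb0 : (0:E) ≤ b' := le_sup_right
        have hax : a ≤ x := le_trans (posPart_le_abs' y') hy'
        have hbx : b' ≤ x := le_trans (negPart_le_abs' y') hy'
        have hs : (p f - g) y' = ((p f) a - g a) - ((p f) b' - g b') := by
          rw [hab]
          simp only [LinearMap.sub_apply, map_sub]
        have e1 : (p f) a - g a ≤ (p (f - g)) x := by
          have q1 := hpFsub a
          have q2 : (p g) a ≤ g a := (hpg a ha0).2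
          have q3 : (p (f - g)) a ≤ (p (f - g)) x :=
            mono_of_pos (p (f - g)) (fun v hv => (hpF v hv).1) hax
          linarith
        have e2 : -((p f) b' - g b') ≤ g x - (p g) x := by
          have q1 := hpFsub b'
          have q2 : 0 ≤ (p (f - g)) b' := (hpF b' hb0).1
          have q3 : (g - p g) b' ≤ (g - p g) x :=
            mono_of_pos (g - p g) (fun v hv => by
              simp only [LinearMap.sub_apply]
              linarith [(hpg v hv).2]) hbx
          simp only [LinearMap.sub_apply] at q3
          linarith
        rw [hs, hBdef]
        linarith
      have hne : {s : ℝ | ∃ y', |y'| ≤ x ∧ s = (p f - g) y'}.Nonempty :=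
        ⟨0, 0, by simpa using hx, by simp⟩
      have hbdd : BddAbove {s : ℝ | ∃ y', |y'| ≤ x ∧ s = (p f - g) y'} := ⟨B, hub⟩
      have hlub := isLUB_csSup hne hbdd
      have hrmem : sSup {s : ℝ | ∃ y', |y'| ≤ x ∧ s = (p f - g) y'} ∈
          {r : ℝ | ∃ p ∈ Ps, IsLUB {s : ℝ | ∃ y, |y| ≤ x ∧ s = (p f - g) y} r} :=
        ⟨p, hp, hlub⟩
      have hbr := hb hrmem
      have hrB : sSup {s : ℝ | ∃ y', |y'| ≤ x ∧ s = (p f - g) y'} ≤ B :=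
        csSup_le hne hub
      linarith
    by_contra hcon
    push_neg at hcon
    linarith [hble (b/2) (by linarith)]
end

section
/- Let E be a vector lattice and f, g positive linear functionals on E. If g lies in the band generated by f in E~ then for every x ≥ 0 and every ε > 0 there is δ > 0 such that for all y with 0 ≤ y ≤ x, f(y) ≤ δ implies g(y) ≤ ε. -/
section StmtSixAux

variable {E : Type*} [Lattice E] [AddCommGroup E] [Module ℝ E]
  [CovariantClass E E (· + ·) (· ≤ ·)]

private lemma lin_pos_sub_neg (s : E →ₗ[ℝ] ℝ) (z : E) : s z = s z⁺ - s z⁻ := by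
  rw [← map_sub, posPart_sub_negPart]

private lemma lin_eq_zero_of_cone {s : E →ₗ[ℝ] ℝ} (h : ∀ z, 0 ≤ z → s z = 0) : s = 0 := by
  ext z
  have h1 := h z⁺ (posPart_nonneg z)
  have h2 := h z⁻ (negPart_nonneg z)
  have h3 := lin_pos_sub_neg s z
  simp only [LinearMap.zero_apply]
  linarith

private lemma eq_zero_of_abs_le_mul {d K : ℝ} (hK : 0 < K)
    (h : ∀ ε : ℝ, 0 < ε → |d| ≤ K * ε) : d = 0 := by
  by_contra hd
  have h0 : 0 < |d| := abs_pos.mpr hd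
  have h1 := h (|d| / (2 * K)) (by positivity)
  have h2 : K * (|d| / (2 * K)) = |d| / 2 := by field_simp
  rw [h2] at h1; linarith

/-- Absolute continuity of `s` with respect to `f` (the ε-δ property). -/
private def ACP (f s : E →ₗ[ℝ] ℝ) : Prop :=
  ∀ x, 0 ≤ x → ∀ ε : ℝ, 0 < ε → ∃ δ : ℝ, 0 < δ ∧
    ∀ y, 0 ≤ y → y ≤ x → f y ≤ δ → s y ≤ ε

/-- Members of Zorn's family: positive, below `g` on the cone, and
absolutely continuous with respect to `f`. -/
private def GoodP (f g s : E →ₗ[ℝ] ℝ) : Prop :=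
  (∀ z, 0 ≤ z → 0 ≤ s z) ∧ (∀ z, 0 ≤ z → s z ≤ g z) ∧ ACP f s

private lemma acp_zero (f : E →ₗ[ℝ] ℝ) : ACP f 0 := by
  intro x _ ε hε
  exact ⟨1, one_pos, fun y _ _ _ => by simp [le_of_lt hε]⟩

private lemma acp_add {f s k : E →ₗ[ℝ] ℝ} (hs : ACP f s)
    (hk : ∀ z, 0 ≤ z → k z ≤ f z) : ACP f (s + k) := by
  intro x hx ε hε
  obtain ⟨δ, hδ, hδ'⟩ := hs x hx (ε / 2) (by positivity)
  refine ⟨min δ (ε / 2), lt_min hδ (by positivity), fun y hy hyx hfy => ?_⟩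
  have h1 : s y ≤ ε / 2 := hδ' y hy hyx (le_trans hfy (min_le_left _ _))
  have h2 : k y ≤ ε / 2 := le_trans (hk y hy) (le_trans hfy (min_le_right _ _))
  simp only [LinearMap.add_apply]
  linarith

private lemma good_zero (f g : E →ₗ[ℝ] ℝ) (hg : ∀ z, 0 ≤ z → 0 ≤ g z) :
    GoodP f g 0 :=
  ⟨fun z _ => by simp, fun z hz => by simpa using hg z hz, acp_zero f⟩

/-- The pointwise supremum of a chain, as a bare function of the point. -/
private noncomputable def chainSup (f g : E →ₗ[ℝ] ℝ)
    (c : Set {s : E →ₗ[ℝ] ℝ // GoodP f g s}) (v : E) : ℝ :=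
  sSup ((fun a : {s : E →ₗ[ℝ] ℝ // GoodP f g s} => a.1 v) '' c)

private lemma chain_ub (f g : E →ₗ[ℝ] ℝ)
    (c : Set {s : E →ₗ[ℝ] ℝ // GoodP f g s})
    (hc : IsChain (fun a b : {s : E →ₗ[ℝ] ℝ // GoodP f g s} =>
      ∀ z, 0 ≤ z → a.1 z ≤ b.1 z) c)
    (a₀ : {s : E →ₗ[ℝ] ℝ // GoodP f g s}) (ha₀ : a₀ ∈ c) :
    ∃ ub : {s : E →ₗ[ℝ] ℝ // GoodP f g s}, ∀ a ∈ c, ∀ z, 0 ≤ z → a.1 z ≤ ub.1 z := by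
  classical
  set A : E → ℝ := chainSup f g c with hA
  have himg_ne : ∀ v : E,
      ((fun a : {s : E →ₗ[ℝ] ℝ // GoodP f g s} => a.1 v) '' c).Nonempty :=
    fun v => ⟨a₀.1 v, ⟨a₀, ha₀, rfl⟩⟩
  have hbdd : ∀ v : E, 0 ≤ v →
      BddAbove ((fun a : {s : E →ₗ[ℝ] ℝ // GoodP f g s} => a.1 v) '' c) := by
    intro v hv
    refine ⟨g v, ?_⟩
    rintro t ⟨a, hac, rfl⟩
    exact a.2.2.1 v hv
  have hAle : ∀ a ∈ c, ∀ v, 0 ≤ v → a.1 v ≤ A v := by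
    intro a hac v hv
    exact le_csSup (hbdd v hv) ⟨a, hac, rfl⟩
  have hAub : ∀ v : E, ∀ B : ℝ, (∀ a ∈ c, a.1 v ≤ B) → A v ≤ B := by
    intro v B hB
    apply csSup_le (himg_ne v)
    rintro t ⟨a, hac, rfl⟩
    exact hB a hac
  have htot : ∀ a ∈ c, ∀ b ∈ c,
      (∀ z, 0 ≤ z → a.1 z ≤ b.1 z) ∨ (∀ z, 0 ≤ z → b.1 z ≤ a.1 z) := by
    intro a ha b hb
    rcases eq_or_ne a b with rfl | hab
    · exact Or.inl fun z _ => le_rfl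
    · exact hc ha hb hab
  have happrox : ∀ l : List E, ∀ ε : ℝ, 0 < ε →
      ∃ a ∈ c, ∀ v ∈ l, 0 ≤ v → A v - ε < a.1 v := by
    intro l ε hε
    induction l with
    | nil => exact ⟨a₀, ha₀, by simp⟩
    | cons v l ih =>
      obtain ⟨a, hac, hal⟩ := ih
      by_cases hv : (0 : E) ≤ v
      · obtain ⟨t, htm, hbt⟩ := exists_lt_of_lt_csSup (himg_ne v)
          (show A v - ε < A v by linarith)
        obtain ⟨b, hbc, rfl⟩ := htm
        rcases htot a hac b hbc with h | h
        · refine ⟨b, hbc, ?_⟩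
          intro w hw hw0
          rcases List.mem_cons.mp hw with rfl | hwl
          · exact hbt
          · exact lt_of_lt_of_le (hal w hwl hw0) (h w hw0)
        · refine ⟨a, hac, ?_⟩
          intro w hw hw0
          rcases List.mem_cons.mp hw with rfl | hwl
          · exact lt_of_lt_of_le hbt (h w hw0)
          · exact hal w hwl hw0
      · refine ⟨a, hac, ?_⟩
        intro w hw hw0
        rcases List.mem_cons.mp hw with rfl | hwl
        · exact absurd hw0 hv
        · exact hal w hwl hw0
  -- additivity of the limit function
  have hadd : ∀ z w : E,
      A (z + w)⁺ - A (z + w)⁻ = (A z⁺ - A z⁻) + (A w⁺ - A w⁻) := by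
    intro z w
    have key : ∀ ε : ℝ, 0 < ε →
        |A (z + w)⁺ - A (z + w)⁻ - ((A z⁺ - A z⁻) + (A w⁺ - A w⁻))| ≤ 6 * ε := by
      intro ε hε
      obtain ⟨a, hac, ha⟩ := happrox [(z + w)⁺, (z + w)⁻, z⁺, z⁻, w⁺, w⁻] ε hε
      have m1 := ha (z + w)⁺ (by simp) (posPart_nonneg _)
      have m2 := ha (z + w)⁻ (by simp) (negPart_nonneg _)
      have m3 := ha z⁺ (by simp) (posPart_nonneg _)
      have m4 := ha z⁻ (by simp) (negPart_nonneg _)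
      have m5 := ha w⁺ (by simp) (posPart_nonneg _)
      have m6 := ha w⁻ (by simp) (negPart_nonneg _)
      have u1 := hAle a hac (z + w)⁺ (posPart_nonneg _)
      have u2 := hAle a hac (z + w)⁻ (negPart_nonneg _)
      have u3 := hAle a hac z⁺ (posPart_nonneg _)
      have u4 := hAle a hac z⁻ (negPart_nonneg _)
      have u5 := hAle a hac w⁺ (posPart_nonneg _)
      have u6 := hAle a hac w⁻ (negPart_nonneg _)
      have tele : a.1 (z + w)⁺ - a.1 (z + w)⁻ = (a.1 z⁺ - a.1 z⁻) + (a.1 w⁺ - a.1 w⁻) := by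
        rw [← lin_pos_sub_neg, ← lin_pos_sub_neg, ← lin_pos_sub_neg, map_add]
      rw [abs_le]
      constructor <;> linarith
    have hz := eq_zero_of_abs_le_mul (by norm_num : (0 : ℝ) < 6) key
    linarith
  -- homogeneity of the limit function
  have hsmul : ∀ (r : ℝ) (z : E),
      A (r • z)⁺ - A (r • z)⁻ = r * (A z⁺ - A z⁻) := by
    intro r z
    have key : ∀ ε : ℝ, 0 < ε →
        |A (r • z)⁺ - A (r • z)⁻ - r * (A z⁺ - A z⁻)| ≤ (6 + 2 * |r|) * ε := by
      intro ε hε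
      obtain ⟨a, hac, ha⟩ := happrox [(r • z)⁺, (r • z)⁻, z⁺, z⁻] ε hε
      have m1 := ha (r • z)⁺ (by simp) (posPart_nonneg _)
      have m2 := ha (r • z)⁻ (by simp) (negPart_nonneg _)
      have m3 := ha z⁺ (by simp) (posPart_nonneg _)
      have m4 := ha z⁻ (by simp) (negPart_nonneg _)
      have u1 := hAle a hac (r • z)⁺ (posPart_nonneg _)
      have u2 := hAle a hac (r • z)⁻ (negPart_nonneg _)
      have u3 := hAle a hac z⁺ (posPart_nonneg _)
      have u4 := hAle a hac z⁻ (negPart_nonneg _)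
      have tele : a.1 (r • z)⁺ - a.1 (r • z)⁻ = r * (a.1 z⁺ - a.1 z⁻) := by
        rw [← lin_pos_sub_neg, ← lin_pos_sub_neg, map_smul, smul_eq_mul]
      have hP : |(A z⁺ - a.1 z⁺) - (A z⁻ - a.1 z⁻)| ≤ 2 * ε := by
        rw [abs_le]; constructor <;> linarith
      have hrP : |r * ((A z⁺ - a.1 z⁺) - (A z⁻ - a.1 z⁻))| ≤ |r| * (2 * ε) := by
        rw [abs_mul]
        exact mul_le_mul_of_nonneg_left hP (abs_nonneg r)
      obtain ⟨hrP1, hrP2⟩ := abs_le.mp hrP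
      have expand : r * ((A z⁺ - a.1 z⁺) - (A z⁻ - a.1 z⁻)) =
          r * (A z⁺ - A z⁻) - r * (a.1 z⁺ - a.1 z⁻) := by ring
      rw [expand] at hrP1 hrP2
      rw [abs_le]
      constructor <;> linarith
    have hpos : (0 : ℝ) < 6 + 2 * |r| := by positivity
    have hz := eq_zero_of_abs_le_mul hpos key
    linarith
  -- the upper bound as a linear map
  let u : E →ₗ[ℝ] ℝ :=
    { toFun := fun z => A z⁺ - A z⁻
      map_add' := hadd
      map_smul' := by
        intro r z
        simp only [RingHom.id_apply, smul_eq_mul]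
        exact hsmul r z }
  have hu_apply : ∀ z : E, u z = A z⁺ - A z⁻ := fun z => rfl
  have hA0 : A 0 = 0 := by
    have himg : (fun a : {s : E →ₗ[ℝ] ℝ // GoodP f g s} => a.1 (0 : E)) '' c = {0} := by
      apply Set.eq_singleton_iff_nonempty_unique_mem.mpr
      refine ⟨himg_ne 0, ?_⟩
      rintro t ⟨a, hac, rfl⟩
      simp
    show chainSup f g c 0 = 0
    unfold chainSup
    rw [himg, csSup_singleton]
  have hueq : ∀ v : E, 0 ≤ v → u v = A v := by
    intro v hv
    rw [hu_apply, posPart_eq_self.mpr hv, negPart_eq_zero.mpr hv, hA0]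
    ring
  have hgood : GoodP f g u := by
    refine ⟨?_, ?_, ?_⟩
    · intro v hv
      rw [hueq v hv]
      exact le_trans (a₀.2.1 v hv) (hAle a₀ ha₀ v hv)
    · intro v hv
      rw [hueq v hv]
      exact hAub v (g v) (fun a hac => a.2.2.1 v hv)
    · intro x hx ε hε
      obtain ⟨a, hac, ha⟩ := happrox [x] (ε / 2) (by positivity)
      have hax : A x - ε / 2 < a.1 x := ha x (by simp) hx
      obtain ⟨δ, hδpos, hδ⟩ := a.2.2.2 x hx (ε / 2) (by positivity)
      refine ⟨δ, hδpos, fun y hy hyx hfy => ?_⟩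
      rw [hueq y hy]
      refine hAub y ε ?_
      intro b hbc
      have h3 : a.1 y ≤ ε / 2 := hδ y hy hyx hfy
      rcases htot b hbc a hac with h | h
      · exact le_trans (h y hy) (by linarith)
      · have h1 : a.1 (x - y) ≤ b.1 (x - y) := h (x - y) (sub_nonneg.mpr hyx)
        have h2 : b.1 x ≤ A x := hAle b hbc x hx
        have e1 : b.1 (x - y) = b.1 x - b.1 y := map_sub _ _ _
        have e2 : a.1 (x - y) = a.1 x - a.1 y := map_sub _ _ _
        linarith
  refine ⟨⟨u, hgood⟩, ?_⟩
  intro a hac z hz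
  have : a.1 z ≤ A z := hAle a hac z hz
  rw [← hueq z hz] at this
  exact this

end StmtSixAux

/-- If `g` lies in the band `{f}^⊥⊥` (every positive functional disjoint from `f`
is disjoint from `g`), then for every `x ≥ 0` and `ε > 0` there is `δ > 0` such
that `0 ≤ y ≤ x` and `f y ≤ δ` imply `g y ≤ ε`. -/
theorem stmt6 {E : Type*} [Lattice E] [AddCommGroup E] [Module ℝ E]
    [CovariantClass E E (· + ·) (· ≤ ·)]
    (f g : E →ₗ[ℝ] ℝ) (hf : ∀ x, 0 ≤ x → 0 ≤ f x)
    (hg : ∀ x, 0 ≤ x → 0 ≤ g x)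
    (hband : ∀ h : E →ₗ[ℝ] ℝ, (∀ x, 0 ≤ x → 0 ≤ h x) →
      DisjointFunc h f → DisjointFunc h g) :
    ∀ x, 0 ≤ x → ∀ ε : ℝ, 0 < ε → ∃ δ : ℝ, 0 < δ ∧
      ∀ y, 0 ≤ y → y ≤ x → f y ≤ δ → g y ≤ ε := by
  classical
  -- Zorn's lemma: a maximal f-absolutely-continuous component of g
  have hzorn : ∃ m : {s : E →ₗ[ℝ] ℝ // GoodP f g s},
      ∀ a : {s : E →ₗ[ℝ] ℝ // GoodP f g s},
        (∀ z, 0 ≤ z → m.1 z ≤ a.1 z) → (∀ z, 0 ≤ z → a.1 z ≤ m.1 z) := by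
    refine exists_maximal_of_chains_bounded ?_ ?_
    · intro c hc
      rcases c.eq_empty_or_nonempty with rfl | ⟨a₀, ha₀⟩
      · exact ⟨⟨0, good_zero f g hg⟩, fun a ha => absurd ha (Set.notMem_empty a)⟩
      · obtain ⟨ub, hub⟩ := chain_ub f g c hc a₀ ha₀
        exact ⟨ub, hub⟩
    · intro a b c hab hbc z hz
      exact le_trans (hab z hz) (hbc z hz)
  obtain ⟨m, hmax⟩ := hzorn
  have hmpos := m.2.1
  have hmle := m.2.2.1
  have hmac := m.2.2.2
  -- the residual g - m is disjoint from f by maximality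
  have hdisj : DisjointFunc (g - m.1) f := by
    intro k hk0 hk1 hk2
    have hgood : GoodP f g (m.1 + k) := by
      refine ⟨?_, ?_, acp_add hmac hk2⟩
      · intro z hz
        simp only [LinearMap.add_apply]
        exact add_nonneg (hmpos z hz) (hk0 z hz)
      · intro z hz
        have h1 := hk1 z hz
        simp only [LinearMap.sub_apply] at h1
        simp only [LinearMap.add_apply]
        linarith
    have hle := hmax ⟨m.1 + k, hgood⟩
      (fun z hz => by
        simp only [LinearMap.add_apply]
        linarith [hk0 z hz])
    apply lin_eq_zero_of_cone
    intro z hz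
    have h1 := hle z hz
    simp only [LinearMap.add_apply] at h1
    have h2 := hk0 z hz
    linarith
  have hrespos : ∀ z, (0 : E) ≤ z → 0 ≤ (g - m.1) z := by
    intro z hz
    simp only [LinearMap.sub_apply]
    linarith [hmle z hz]
  have hdg : DisjointFunc (g - m.1) g := hband _ hrespos hdisj
  have hgm : g - m.1 = 0 := by
    refine hdg (g - m.1) hrespos (fun z _ => le_rfl) ?_
    intro z hz
    simp only [LinearMap.sub_apply]
    linarith [hmpos z hz]
  have hge : ∀ y : E, g y = m.1 y := by
    intro y
    have := congrArg (fun t : E →ₗ[ℝ] ℝ => t y) hgm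
    simp only [LinearMap.sub_apply, LinearMap.zero_apply] at this
    linarith
  intro x hx ε hε
  obtain ⟨δ, hδ, hδ'⟩ := hmac x hx ε hε
  refine ⟨δ, hδ, fun y hy hyx hfy => ?_⟩
  rw [hge y]
  exact hδ' y hy hyx hfy
end

section
/- Let E be a vector lattice, f a positive linear functional on E, and 𝒫 a set of band projections on E~ generating the fragments of f, and suppose g is a fragment of f. Then g lies in the weak-* closure of the set 𝒫(f) := { p f : p ∈ 𝒫 } within the order interval [0, f]; in particular, for every finite set x₁, …, x_n ∈ E and ε > 0 there is p ∈ 𝒫 with |p f(x_i) − g(x_i)| ≤ ε for all i. -/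
section Aux

variable {E : Type*} [Lattice E] [AddCommGroup E] [Module ℝ E]
    [CovariantClass E E (· + ·) (· ≤ ·)]

/-- A positive linear functional is monotone. -/
lemma posMono (g : E →ₗ[ℝ] ℝ) (hg : ∀ x, 0 ≤ x → 0 ≤ g x) {a b : E} (hab : a ≤ b) :
    g a ≤ g b := by
  have h := hg (b - a) (sub_nonneg.2 hab)
  rw [map_sub] at h
  linarith

/-- Sums of nonnegative elements are nonnegative. -/
lemma sum_nonneg'' {ι : Type*} (s : Finset ι) (F : ι → E) (h : ∀ i ∈ s, 0 ≤ F i) :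
    0 ≤ ∑ i ∈ s, F i :=
  Finset.sum_induction F (fun y => 0 ≤ y) (fun _ _ ha hb => add_nonneg ha hb) le_rfl h

/-- Each nonnegative summand is below the whole sum. -/
lemma single_le_sum'' {ι : Type*} (s : Finset ι) (F : ι → E) (h : ∀ i ∈ s, 0 ≤ F i)
    {i : ι} (hi : i ∈ s) : F i ≤ ∑ j ∈ s, F j := by
  classical
  rw [← Finset.add_sum_erase s F hi]
  exact le_add_of_nonneg_right
    (sum_nonneg'' _ _ fun j hj => h j (Finset.mem_of_mem_erase hj))

/-- Decomposition into positive and negative parts. -/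
lemma posPart_decomp (a : E) : a ⊔ 0 - (-a ⊔ 0) = a := by
  have h1 : -a ⊔ 0 = -(a ⊓ 0) := by rw [neg_inf, neg_zero]
  have h2 : a ⊓ 0 + (a ⊔ 0) = a + 0 := inf_add_sup a 0
  rw [h1, sub_neg_eq_add, add_comm (a ⊔ 0) (a ⊓ 0), h2, add_zero]

/-- Key consequence of disjointness: over decompositions of any positive `u`,
`g` and `h` can simultaneously be made arbitrarily small.  Here `q x = f (x ⊔ 0)`
is assumed positively homogeneous (which follows from the generation hypothesis in
the application). -/
lemma key_disjoint (f g h : E →ₗ[ℝ] ℝ)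
    (hf : ∀ x, 0 ≤ x → 0 ≤ f x)
    (hg0 : ∀ x, 0 ≤ x → 0 ≤ g x) (hgf : ∀ x, 0 ≤ x → g x ≤ f x)
    (hh0 : ∀ x, 0 ≤ x → 0 ≤ h x) (hhf : ∀ x, 0 ≤ x → h x ≤ f x)
    (hq : ∀ c : ℝ, 0 < c → ∀ x : E, f ((c • x) ⊔ 0) = c * f (x ⊔ 0))
    (hd : DisjointFunc g h)
    (u : E) (hu : 0 ≤ u) (δ : ℝ) (hδ : 0 < δ) :
    ∃ y, 0 ≤ y ∧ y ≤ u ∧ g (u - y) ≤ δ ∧ h y ≤ δ := by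
  by_contra hcon
  push_neg at hcon
  have claim : ∀ y, 0 ≤ y → y ≤ u → δ ≤ g (u - y) + h y := by
    intro y hy0 hyu
    by_contra hlt
    push_neg at hlt
    have h1 : 0 ≤ g (u - y) := hg0 _ (sub_nonneg.2 hyu)
    have h2 : 0 ≤ h y := hh0 _ hy0
    exact absurd (hcon y hy0 hyu (by linarith)) (by linarith)
  have hu0 : u ≠ 0 := by
    intro h0
    have := claim 0 le_rfl (h0 ▸ le_rfl)
    simp [h0] at this
    linarith
  -- the cone of "f-almost nonnegative" elements
  set C : Set E := {x | f (-x ⊔ 0) = 0} with hC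
  have hposC : ∀ x : E, 0 ≤ x → x ∈ C := by
    intro x hx
    have : -x ⊔ 0 = 0 := sup_eq_right.2 (neg_nonpos.2 hx)
    simp only [hC, Set.mem_setOf_eq, this, map_zero]
  have hCadd : ∀ a ∈ C, ∀ b ∈ C, a + b ∈ C := by
    intro a ha b hb
    have hle : -(a + b) ⊔ 0 ≤ (-a ⊔ 0) + (-b ⊔ 0) := by
      apply sup_le
      · rw [neg_add]
        exact add_le_add le_sup_left le_sup_left
      · exact add_nonneg le_sup_right le_sup_right
    have h1 : f (-(a + b) ⊔ 0) ≤ f ((-a ⊔ 0) + (-b ⊔ 0)) := posMono f hf hle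
    have h2 : 0 ≤ f (-(a + b) ⊔ 0) := hf _ le_sup_right
    have h3 : f ((-a ⊔ 0) + (-b ⊔ 0)) = 0 := by
      rw [map_add, ha, hb, add_zero]
    simp only [hC, Set.mem_setOf_eq]
    linarith
  have hCsmul : ∀ c : ℝ, 0 < c → ∀ a ∈ C, c • a ∈ C := by
    intro c hc a ha
    simp only [hC, Set.mem_setOf_eq] at ha ⊢
    rw [← smul_neg, hq c hc, ha, mul_zero]
  -- monotonicity w.r.t. the cone, for functionals squeezed between 0 and f
  have monoC : ∀ G : E →ₗ[ℝ] ℝ, (∀ x, 0 ≤ x → 0 ≤ G x) → (∀ x, 0 ≤ x → G x ≤ f x) →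
      ∀ s t : E, t - s ∈ C → G s ≤ G t := by
    intro G hG0 hGf s t hst
    have hdec : (t - s) ⊔ 0 - (-(t - s) ⊔ 0) = t - s := posPart_decomp (t - s)
    have h1 : G ((t - s) ⊔ 0 - (-(t - s) ⊔ 0)) = G (t - s) := by rw [hdec]
    have h2 : G (-(t - s) ⊔ 0) = 0 := by
      have ha : 0 ≤ G (-(t - s) ⊔ 0) := hG0 _ le_sup_right
      have hb : G (-(t - s) ⊔ 0) ≤ f (-(t - s) ⊔ 0) := hGf _ le_sup_right
      have hc : f (-(t - s) ⊔ 0) = 0 := hst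
      linarith
    rw [map_sub, h2, sub_zero] at h1
    have h3 : 0 ≤ G ((t - s) ⊔ 0) := hG0 _ le_sup_right
    rw [map_sub] at h1
    linarith
  have hC_nonneg : ∀ G : E →ₗ[ℝ] ℝ, (∀ x, 0 ≤ x → 0 ≤ G x) → (∀ x, 0 ≤ x → G x ≤ f x) →
      ∀ a ∈ C, 0 ≤ G a := by
    intro G hG0 hGf a ha
    have := monoC G hG0 hGf 0 a (by simpa using ha)
    simpa using this
  -- the sublinear functional Φ
  set S : E → Set ℝ := fun x =>
    {r : ℝ | ∃ a b : E, a ∈ C ∧ b ∈ C ∧ a + b - x ∈ C ∧ r = g a + h b} with hS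
  have hne : ∀ x, (S x).Nonempty := by
    intro x
    refine ⟨g (x ⊔ 0) + h 0, x ⊔ 0, 0, hposC _ le_sup_right, hposC _ le_rfl, ?_, rfl⟩
    rw [add_zero]
    exact hposC _ (sub_nonneg.2 le_sup_left)
  have hbdd : ∀ x, BddBelow (S x) := by
    intro x
    refine ⟨0, ?_⟩
    rintro r ⟨a, b, ha, hb, -, rfl⟩
    exact add_nonneg (hC_nonneg g hg0 hgf a ha) (hC_nonneg h hh0 hhf b hb)
  set Φ : E → ℝ := fun x => sInf (S x) with hΦ
  have hΦ_nonneg : ∀ x, 0 ≤ Φ x := by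
    intro x
    apply le_csInf (hne x)
    rintro r ⟨a, b, ha, hb, -, rfl⟩
    exact add_nonneg (hC_nonneg g hg0 hgf a ha) (hC_nonneg h hh0 hhf b hb)
  have hΦ_le : ∀ x r, r ∈ S x → Φ x ≤ r := fun x r hr => csInf_le (hbdd x) hr
  have hΦ_add : ∀ x y, Φ (x + y) ≤ Φ x + Φ y := by
    intro x y
    have step : ∀ r ∈ S x, ∀ s ∈ S y, Φ (x + y) ≤ r + s := by
      rintro r ⟨a, b, ha, hb, hx, rfl⟩ s ⟨a', b', ha', hb', hy, rfl⟩
      have hmem : g a + h b + (g a' + h b') ∈ S (x + y) := by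
        refine ⟨a + a', b + b', hCadd a ha a' ha', hCadd b hb b' hb', ?_, ?_⟩
        · have : a + a' + (b + b') - (x + y) = (a + b - x) + (a' + b' - y) := by abel
          rw [this]
          exact hCadd _ hx _ hy
        · rw [map_add, map_add]; ring
      exact hΦ_le _ _ hmem
    have h1 : ∀ s ∈ S y, Φ (x + y) - s ≤ Φ x := by
      intro s hs
      apply le_csInf (hne x)
      intro r hr
      have := step r hr s hs
      linarith
    have h2 : Φ (x + y) - Φ x ≤ Φ y := by
      apply le_csInf (hne y)
      intro s hs
      have := h1 s hs
      linarith
    linarith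
  have himage : ∀ x : E, ∀ r ∈ S x, ∀ c : ℝ, 0 < c → c * r ∈ S (c • x) := by
    rintro x r ⟨a, b, ha, hb, hx, rfl⟩ c hc
    refine ⟨c • a, c • b, hCsmul c hc a ha, hCsmul c hc b hb, ?_, ?_⟩
    · have : c • a + c • b - c • x = c • (a + b - x) := by
        rw [smul_sub, smul_add]
      rw [this]
      exact hCsmul c hc _ hx
    · rw [map_smul, map_smul]; simp only [smul_eq_mul]; ring
  have hΦ_le_smul : ∀ c : ℝ, 0 < c → ∀ x, Φ (c • x) ≤ c * Φ x := by
    intro c hc x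
    have h1 : Φ (c • x) / c ≤ Φ x := by
      apply le_csInf (hne x)
      intro r hr
      have := hΦ_le _ _ (himage x r hr c hc)
      rw [div_le_iff₀ hc]
      linarith [this]
    rw [div_le_iff₀ hc] at h1
    linarith [h1]
  have hΦ_smul : ∀ c : ℝ, 0 < c → ∀ x, Φ (c • x) = c * Φ x := by
    intro c hc x
    refine le_antisymm (hΦ_le_smul c hc x) ?_
    have h2 := hΦ_le_smul c⁻¹ (by positivity) (c • x)
    rw [inv_smul_smul₀ hc.ne'] at h2
    have h3 := mul_le_mul_of_nonneg_left h2 hc.le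
    rwa [← mul_assoc, mul_inv_cancel₀ hc.ne', one_mul] at h3
  -- Φ u ≥ δ
  have hΦu : δ ≤ Φ u := by
    apply le_csInf (hne u)
    rintro r ⟨a, b, ha, hb, hab, rfl⟩
    set y : E := ((u - a) ⊔ 0) ⊓ u with hy
    have hy0 : 0 ≤ y := le_inf le_sup_right hu
    have hyu : y ≤ u := inf_le_right
    -- h y ≤ h b
    have hyb : h y ≤ h b := by
      apply monoC h hh0 hhf
      -- b - y ∈ C, i.e. f ((y - b) ⊔ 0) = 0
      have hD0 : (0:E) ≤ (u - a - b) ⊔ 0 + (-b ⊔ 0) :=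
        add_nonneg le_sup_right le_sup_right
      have hyD : y - b ≤ (u - a - b) ⊔ 0 + (-b ⊔ 0) := by
        have h1 : y ≤ (u - a) ⊔ 0 := inf_le_left
        have h2 : (u - a) ⊔ 0 ≤ ((u - a - b) ⊔ 0 + (-b ⊔ 0)) + b := by
          apply sup_le
          · calc u - a = (u - a - b) + b := by abel
              _ ≤ ((u - a - b) ⊔ 0) + b := add_le_add_left le_sup_left b
              _ ≤ ((u - a - b) ⊔ 0 + (-b ⊔ 0)) + b := by
                  apply add_le_add_left
                  exact le_add_of_nonneg_right le_sup_right
          · calc (0:E) = -b + b := by abel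
              _ ≤ (-b ⊔ 0) + b := add_le_add_left le_sup_left b
              _ ≤ ((u - a - b) ⊔ 0 + (-b ⊔ 0)) + b := by
                  apply add_le_add_left
                  rw [add_comm ((u - a - b) ⊔ 0)]
                  exact le_add_of_nonneg_right le_sup_right
        calc y - b ≤ (u - a) ⊔ 0 - b := sub_le_sub_right h1 b
          _ ≤ (u - a - b) ⊔ 0 + (-b ⊔ 0) := by
              rw [sub_le_iff_le_add]
              exact h2
      have hsup : (y - b) ⊔ 0 ≤ (u - a - b) ⊔ 0 + (-b ⊔ 0) := sup_le hyD hD0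
      have h1 : f ((y - b) ⊔ 0) ≤ f ((u - a - b) ⊔ 0 + (-b ⊔ 0)) := posMono f hf hsup
      have h2 : f ((u - a - b) ⊔ 0 + (-b ⊔ 0)) = 0 := by
        rw [map_add]
        have e1 : f ((u - a - b) ⊔ 0) = 0 := by
          have : -(a + b - u) = u - a - b := by abel
          have := hab
          simp only [hC, Set.mem_setOf_eq] at this
          rw [show -(a + b - u) = u - a - b by abel] at this
          exact this
        have e2 : f (-b ⊔ 0) = 0 := hb
        rw [e1, e2, add_zero]
      have h3 : 0 ≤ f ((y - b) ⊔ 0) := hf _ le_sup_right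
      show f (-(b - y) ⊔ 0) = 0
      rw [neg_sub]
      linarith
    -- g (u - y) ≤ g a
    have hga : g (u - y) ≤ g a := by
      apply monoC g hg0 hgf
      -- a - (u - y) ∈ C, i.e. f ((u - y - a) ⊔ 0) = 0
      have huy : u - y = (u - ((u - a) ⊔ 0)) ⊔ 0 := by
        rw [hy, sub_inf, sub_self]
      have hD0 : (0:E) ≤ -a ⊔ 0 := le_sup_right
      have h1 : u - y - a ≤ -a ⊔ 0 := by
        rw [huy, sub_le_iff_le_add]
        apply sup_le
        · have : u - ((u - a) ⊔ 0) ≤ u - (u - a) := by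
            apply sub_le_sub_left le_sup_left
          calc u - ((u - a) ⊔ 0) ≤ u - (u - a) := this
            _ = a := by abel
            _ = 0 + a := by rw [zero_add]
            _ ≤ (-a ⊔ 0) + a := add_le_add_left le_sup_right a
        · calc (0:E) = -a + a := by abel
            _ ≤ (-a ⊔ 0) + a := add_le_add_left le_sup_left a
      have hsup : (u - y - a) ⊔ 0 ≤ -a ⊔ 0 := sup_le h1 hD0
      have h2 : f ((u - y - a) ⊔ 0) ≤ f (-a ⊔ 0) := posMono f hf hsup
      have h3 : f (-a ⊔ 0) = 0 := ha
      have h4 : 0 ≤ f ((u - y - a) ⊔ 0) := hf _ le_sup_right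
      show f (-(a - (u - y)) ⊔ 0) = 0
      rw [show -(a - (u - y)) = u - y - a by abel]
      linarith
    have := claim y hy0 hyu
    linarith
  -- extend t • u ↦ t * Φ u by Hahn–Banach
  set pm : E →ₗ.[ℝ] ℝ := LinearPMap.mkSpanSingleton u (Φ u) hu0 with hpm
  have hfle : ∀ z : pm.domain, pm z ≤ Φ z := by
    rintro ⟨z, hz⟩
    have hz' : z ∈ Submodule.span ℝ {u} := hz
    rw [Submodule.mem_span_singleton] at hz'
    obtain ⟨t, rfl⟩ := hz'
    have happ : pm ⟨t • u, hz⟩ = t • Φ u :=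
      LinearPMap.mkSpanSingleton'_apply _ _ _ t _
    rw [happ]
    rcases lt_trichotomy t 0 with htn | rfl | htp
    · have h1 : (t : ℝ) • Φ u ≤ 0 := smul_nonpos_of_nonpos_of_nonneg htn.le (hΦ_nonneg u)
      exact h1.trans (hΦ_nonneg _)
    · rw [zero_smul]
      exact hΦ_nonneg _
    · rw [hΦ_smul t htp u]; simp [smul_eq_mul]
  obtain ⟨H, hHeq, hHle⟩ := exists_extension_of_le_sublinear pm Φ
    (fun c hc x => hΦ_smul c hc x) hΦ_add hfle
  -- H contradicts disjointness
  have hH_le_g : ∀ x, 0 ≤ x → H x ≤ g x := by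
    intro x hx
    refine (hHle x).trans ((hΦ_le x _ ⟨x, 0, hposC x hx, hposC 0 le_rfl, ?_, rfl⟩).trans ?_)
    · rw [add_zero, sub_self]; exact hposC 0 le_rfl
    · rw [map_zero, add_zero]
  have hH_le_h : ∀ x, 0 ≤ x → H x ≤ h x := by
    intro x hx
    refine (hHle x).trans ((hΦ_le x _ ⟨0, x, hposC 0 le_rfl, hposC x hx, ?_, rfl⟩).trans ?_)
    · rw [zero_add, sub_self]; exact hposC 0 le_rfl
    · rw [map_zero, zero_add]
  have hH_pos : ∀ x, 0 ≤ x → 0 ≤ H x := by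
    intro x hx
    have h1 : H (-x) ≤ Φ (-x) := hHle (-x)
    have h2 : Φ (-x) ≤ 0 := by
      have := hΦ_le (-x) (g 0 + h 0) ⟨0, 0, hposC 0 le_rfl, hposC 0 le_rfl, ?_, rfl⟩
      · simpa using this
      · rw [add_zero, zero_sub, neg_neg]
        exact hposC x hx
    rw [map_neg] at h1
    linarith
  have hH0 := hd H hH_pos hH_le_g hH_le_h
  have humem : u ∈ pm.domain := Submodule.mem_span_singleton_self u
  have hHu : H u = Φ u := by
    have h1 := hHeq ⟨u, humem⟩
    have h2 : pm ⟨u, humem⟩ = Φ u := LinearPMap.mkSpanSingleton_apply _ _ hu0 _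
    rw [h1, h2]
  rw [hH0] at hHu
  simp only [LinearMap.zero_apply] at hHu
  rw [← hHu] at hΦu
  linarith

end Aux

/-- A fragment `g` of `f` lies in the weak-* closure of `Ps(f)`: for every finite
family `x₁, …, xₙ` and `ε > 0` there is `p ∈ Ps` with `|p f (xᵢ) - g (xᵢ)| ≤ ε`. -/
theorem stmt11 {E : Type*} [Lattice E] [AddCommGroup E] [Module ℝ E]
    [CovariantClass E E (· + ·) (· ≤ ·)]
    (f g : E →ₗ[ℝ] ℝ) (hf : ∀ x, 0 ≤ x → 0 ≤ f x)
    (hg : ∀ x, 0 ≤ x → 0 ≤ g x) (hgf : ∀ x, 0 ≤ x → g x ≤ f x)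
    (Ps : Set ((E →ₗ[ℝ] ℝ) →ₗ[ℝ] (E →ₗ[ℝ] ℝ)))
    (hPs : ∀ p ∈ Ps, IsBandProj p)
    (hgen : ∀ x : E, IsLUB {r : ℝ | ∃ p ∈ Ps, r = (p f) x} (f (x ⊔ 0)))
    (hfrag : DisjointFunc g (f - g)) :
    ∀ (n : ℕ) (x : Fin n → E) (ε : ℝ), 0 < ε →
      ∃ p ∈ Ps, ∀ i, |(p f) (x i) - g (x i)| ≤ ε := by
  intro n x ε hε
  -- homogeneity of x ↦ f (x ⊔ 0), from the generation hypothesis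
  have hq : ∀ c : ℝ, 0 < c → ∀ z : E, f ((c • z) ⊔ 0) = c * f (z ⊔ 0) := by
    intro c hc z
    have h1 := hgen z
    have h2 := hgen (c • z)
    have hset : {r : ℝ | ∃ p ∈ Ps, r = (p f) (c • z)} =
        (fun r => c * r) '' {r : ℝ | ∃ p ∈ Ps, r = (p f) z} := by
      ext r
      constructor
      · rintro ⟨p, hp, rfl⟩
        exact ⟨(p f) z, ⟨p, hp, rfl⟩, by rw [map_smul, smul_eq_mul]⟩
      · rintro ⟨s, ⟨p, hp, rfl⟩, rfl⟩
        exact ⟨p, hp, by rw [map_smul, smul_eq_mul]⟩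
    have hlub : IsLUB ((fun r => c * r) '' {r : ℝ | ∃ p ∈ Ps, r = (p f) z})
        (c * f (z ⊔ 0)) := by
      constructor
      · rintro r ⟨s, hs, rfl⟩
        exact mul_le_mul_of_nonneg_left (h1.1 hs) hc.le
      · intro b hb
        have hub : ∀ s ∈ {r : ℝ | ∃ p ∈ Ps, r = (p f) z}, s ≤ b / c := by
          intro s hs
          have h4 := hb ⟨s, hs, rfl⟩
          dsimp only at h4
          rw [le_div_iff₀ hc]
          linarith [h4]
        have h3 := h1.2 hub
        rw [le_div_iff₀ hc] at h3
        linarith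
    rw [← hset] at hlub
    exact h2.unique hlub
  set δ := ε / 12 with hδdef
  have hδ : 0 < δ := by positivity
  set u : E := ∑ i, ((x i ⊔ 0) + (-(x i) ⊔ 0)) with hu_def
  have hterm : ∀ i : Fin n, (0:E) ≤ (x i ⊔ 0) + (-(x i) ⊔ 0) := fun i =>
    add_nonneg le_sup_right le_sup_right
  have hu0 : (0:E) ≤ u := by
    rw [hu_def]
    exact sum_nonneg'' _ _ fun i _ => hterm i
  have hfg_pos : ∀ z, 0 ≤ z → 0 ≤ (f - g) z := by
    intro z hz
    simp only [LinearMap.sub_apply, sub_nonneg]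
    exact hgf z hz
  have hfg_le : ∀ z, 0 ≤ z → (f - g) z ≤ f z := by
    intro z hz
    simp only [LinearMap.sub_apply]
    have := hg z hz
    linarith
  obtain ⟨v, hv0, hvu, hgw, hfgv⟩ :=
    key_disjoint f g (f - g) hf hg hgf hfg_pos hfg_le hq hfrag u hu0 δ hδ
  set w : E := u - v with hw_def
  have hw0 : (0:E) ≤ w := sub_nonneg.2 hvu
  have hfgv' : f v - g v ≤ δ := by simpa using hfgv
  -- choose p using the generation hypothesis at v - w
  have hlt : f ((v - w) ⊔ 0) - δ < f ((v - w) ⊔ 0) := by linarith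
  obtain ⟨r, hr, hrlt, -⟩ := (hgen (v - w)).exists_between hlt
  obtain ⟨p, hp, rfl⟩ := hr
  refine ⟨p, hp, ?_⟩
  set P : E →ₗ[ℝ] ℝ := p f with hP_def
  have hP := (hPs p hp).2 f hf
  have hP_pos : ∀ z, 0 ≤ z → 0 ≤ P z := fun z hz => (hP z hz).1
  have hP_le_f : ∀ z, 0 ≤ z → P z ≤ f z := fun z hz => (hP z hz).2
  have hsup0 : (0:E) ≤ (v - w) ⊔ 0 := le_sup_right
  have hA : g v - g w ≤ f ((v - w) ⊔ 0) := by
    have h1 : g (v - w) ≤ g ((v - w) ⊔ 0) := posMono g hg le_sup_left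
    have h2 : g ((v - w) ⊔ 0) ≤ f ((v - w) ⊔ 0) := hgf _ hsup0
    rw [map_sub] at h1
    linarith
  have hB : g v - g w - δ < P v - P w := by
    have hPsub : P (v - w) = P v - P w := map_sub P v w
    rw [hPsub] at hrlt
    linarith
  have hgw0 : 0 ≤ g w := hg w hw0
  have hPv_ub : P v ≤ g v + δ := by
    have := hP_le_f v hv0
    linarith
  have hPw0 : 0 ≤ P w := hP_pos w hw0
  have hPw_ub : P w ≤ 3 * δ := by linarith
  have hPv_lb : g v - 2 * δ ≤ P v := by linarith
  -- the main pointwise estimate on [0, u]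
  have main : ∀ z, 0 ≤ z → z ≤ u → |P z - g z| ≤ 6 * δ := by
    intro z hz0 hzu
    set z₁ : E := z ⊓ v with hz₁
    set z₂ : E := z - z₁ with hz₂
    have hz₁0 : (0:E) ≤ z₁ := le_inf hz0 hv0
    have hz₁v : z₁ ≤ v := inf_le_right
    have hz₂0 : (0:E) ≤ z₂ := sub_nonneg.2 inf_le_left
    have hz₂w : z₂ ≤ w := by
      rw [hz₂, hz₁, sub_inf, sub_self]
      apply sup_le hw0
      rw [sub_le_iff_le_add]
      calc z ≤ u := hzu
        _ = w + v := by rw [hw_def]; abel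
    have hzsplit : z = z₁ + z₂ := by rw [hz₂]; abel
    have hPz : P z = P z₁ + P z₂ := by rw [hzsplit, map_add]
    have hgz : g z = g z₁ + g z₂ := by rw [hzsplit, map_add]
    have e1 : P z₁ - g z₁ ≤ δ := by
      have h1 : P z₁ ≤ f z₁ := hP_le_f z₁ hz₁0
      have h2 : f z₁ - g z₁ ≤ f v - g v := by
        have h3 := hfg_pos (v - z₁) (sub_nonneg.2 hz₁v)
        simp only [LinearMap.sub_apply, map_sub] at h3
        linarith
      linarith
    have e2 : g z₁ - P z₁ ≤ 3 * δ := by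
      have hvz₁0 : (0:E) ≤ v - z₁ := sub_nonneg.2 hz₁v
      have h1 : P (v - z₁) ≤ f (v - z₁) := hP_le_f _ hvz₁0
      have h2 : f (v - z₁) - g (v - z₁) ≤ δ := by
        have h3 := hfg_pos z₁ hz₁0
        simp only [LinearMap.sub_apply] at h3
        rw [map_sub, map_sub]
        linarith
      rw [map_sub, map_sub] at h1 h2
      linarith
    have e3 : P z₂ ≤ 3 * δ := (posMono P hP_pos hz₂w).trans hPw_ub
    have e4 : g z₂ ≤ δ := (posMono g hg hz₂w).trans hgw
    have e5 : 0 ≤ P z₂ := hP_pos z₂ hz₂0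
    have e6 : 0 ≤ g z₂ := hg z₂ hz₂0
    rw [abs_le]
    constructor
    · rw [hPz, hgz]; linarith
    · rw [hPz, hgz]; linarith
  -- conclude for each i
  intro i
  have hpos_le : (x i ⊔ 0) ≤ u := by
    calc (x i ⊔ 0) ≤ (x i ⊔ 0) + (-(x i) ⊔ 0) := le_add_of_nonneg_right le_sup_right
      _ ≤ u := by
          rw [hu_def]
          exact single_le_sum'' _ _ (fun j _ => hterm j) (Finset.mem_univ i)
  have hneg_le : (-(x i) ⊔ 0) ≤ u := by
    calc (-(x i) ⊔ 0) ≤ (x i ⊔ 0) + (-(x i) ⊔ 0) := le_add_of_nonneg_left le_sup_right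
      _ ≤ u := by
          rw [hu_def]
          exact single_le_sum'' _ _ (fun j _ => hterm j) (Finset.mem_univ i)
  have hdecomp : x i = (x i ⊔ 0) - (-(x i) ⊔ 0) := (posPart_decomp (x i)).symm
  have b1 := main (x i ⊔ 0) le_sup_right hpos_le
  have b2 := main (-(x i) ⊔ 0) le_sup_right hneg_le
  have hPx : P (x i) = P (x i ⊔ 0) - P (-(x i) ⊔ 0) := by
    conv_lhs => rw [hdecomp]
    rw [map_sub]
  have hgx : g (x i) = g (x i ⊔ 0) - g (-(x i) ⊔ 0) := by
    conv_lhs => rw [hdecomp]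
    rw [map_sub]
  rw [abs_le] at b1 b2 ⊢
  constructor
  · rw [hPx, hgx]; rw [hδdef] at b1 b2; linarith [b1.1, b2.2]
  · rw [hPx, hgx]; rw [hδdef] at b1 b2; linarith [b1.2, b2.1]
end

section
/- Farkas Lemma for sublinear functionals with polyhedral constraint: let X be a real vector space, P : X → ℝ a polyhedral sublinear functional (maximum of finitely many linear functionals), Q : X → ℝ a sublinear functional, and u, v ∈ ℝ with { x : P(x) ≤ u } nonempty. Then { x : P(x) ≤ u } ⊆ { x : Q(−x) ≥ −v } if and only if there exist a linear functional A ∈ ∂P, a linear functional B ∈ ∂Q, and a scalar α ≥ 0 with B = α A and α u ≤ v. -/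
section Aux
variable {X : Type*} [AddCommGroup X] [Module ℝ X]

lemma farkas_cross {R : X → ℝ}
    (hadd : ∀ x y, R (x + y) ≤ R x + R y)
    (hhom : ∀ (c : ℝ), 0 ≤ c → ∀ x, R (c • x) = c * R x)
    {g : X →ₗ[ℝ] ℝ} {x y : X} (hx : 0 < g x) (hy : g y < 0)
    (hz : 0 ≤ R (g x • y + (-(g y)) • x)) :
    -R x / g x ≤ R y / (-(g y)) := by
  have h1 : R (g x • y + (-(g y)) • x) ≤ g x * R y + (-(g y)) * R x := by
    calc R (g x • y + (-(g y)) • x) ≤ R (g x • y) + R ((-(g y)) • x) := hadd _ _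
      _ = g x * R y + (-(g y)) * R x := by rw [hhom _ hx.le, hhom _ (by linarith)]
  have h2 : (0:ℝ) ≤ g x * R y + (-(g y)) * R x := le_trans hz h1
  rw [div_le_div_iff₀ hx (by linarith)]
  nlinarith

lemma farkas_eq : ∀ (k : ℕ) (e : Fin k → X →ₗ[ℝ] ℝ) (R : X → ℝ),
    (∀ x y, R (x + y) ≤ R x + R y) →
    (∀ (c : ℝ), 0 ≤ c → ∀ x, R (c • x) = c * R x) →
    (∀ x, (∀ j, e j x = 0) → 0 ≤ R x) →
    ∃ η : Fin k → ℝ, ∀ x, 0 ≤ R x + ∑ j, η j * e j x := by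
  intro k
  induction k with
  | zero =>
      intro e R hadd hhom hpos
      exact ⟨fun j => 0, fun x => by simpa using hpos x (fun j => j.elim0)⟩
  | succ k IH =>
      intro e R hadd hhom hpos
      set E := e (Fin.last k) with hE
      by_cases hdeg : ∀ x, (∀ j : Fin k, e j.castSucc x = 0) → E x = 0
      · have hside : ∀ x, (∀ j : Fin k, e j.castSucc x = 0) → 0 ≤ R x := by
          intro x hx
          refine hpos x (fun j => ?_)
          refine Fin.lastCases ?_ ?_ j
          · exact hdeg x hx
          · exact hx
        obtain ⟨η', hη'⟩ := IH (fun j => e j.castSucc) R hadd hhom hside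
        refine ⟨Fin.snoc η' 0, fun x => ?_⟩
        have h := hη' x
        rw [Fin.sum_univ_castSucc]
        simpa [Fin.snoc_castSucc, Fin.snoc_last] using h
      · push_neg at hdeg
        obtain ⟨x₁, hx₁ker, hx₁⟩ := hdeg
        have hcross : ∀ z w, (∀ j : Fin k, e j.castSucc z = 0) →
            (∀ j : Fin k, e j.castSucc w = 0) → 0 < E z → E w < 0 →
            -R z / E z ≤ R w / (-(E w)) := by
          intro z w hzk hwk hz hw
          refine farkas_cross hadd hhom hz hw (hpos _ (fun j => ?_))
          refine Fin.lastCases ?_ ?_ j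
          · show E (E z • w + (-(E w)) • z) = 0
            rw [map_add, map_smul, map_smul, smul_eq_mul, smul_eq_mul]; ring
          · intro j
            show e j.castSucc _ = 0
            rw [map_add, map_smul, map_smul, hzk j, hwk j, smul_zero, smul_zero, add_zero]
        obtain ⟨xp, hxpker, hxp⟩ : ∃ z, (∀ j : Fin k, e j.castSucc z = 0) ∧ 0 < E z := by
          rcases hx₁.lt_or_gt with h | h
          · exact ⟨-x₁, fun j => by rw [map_neg, hx₁ker j, neg_zero], by rw [map_neg]; linarith⟩
          · exact ⟨x₁, hx₁ker, h⟩
        obtain ⟨xn, hxnker, hxn⟩ : ∃ z, (∀ j : Fin k, e j.castSucc z = 0) ∧ E z < 0 := by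
          rcases hx₁.lt_or_gt with h | h
          · exact ⟨x₁, hx₁ker, h⟩
          · exact ⟨-x₁, fun j => by rw [map_neg, hx₁ker j, neg_zero], by rw [map_neg]; linarith⟩
        set Λ : Set ℝ := {r | ∃ z, (∀ j : Fin k, e j.castSucc z = 0) ∧ 0 < E z ∧ r = -R z / E z}
          with hΛ
        have hne : Λ.Nonempty := ⟨_, xp, hxpker, hxp, rfl⟩
        have hbdd : BddAbove Λ := by
          refine ⟨R xn / (-(E xn)), ?_⟩
          rintro r ⟨z, hzk, hz, rfl⟩
          exact hcross z xn hzk hxnker hz hxn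
        set μ := sSup Λ with hμ
        have hkey : ∀ x, (∀ j : Fin k, e j.castSucc x = 0) → 0 ≤ R x + μ * E x := by
          intro x hxk
          rcases lt_trichotomy (E x) 0 with h | h | h
          · have hle : μ ≤ R x / (-(E x)) := by
              refine csSup_le hne ?_
              rintro r ⟨z, hzk, hz, rfl⟩
              exact hcross z x hzk hxk hz h
            have h2 := (le_div_iff₀ (by linarith : (0:ℝ) < -(E x))).mp hle
            nlinarith
          · have h0 : 0 ≤ R x := by
              refine hpos x (fun j => ?_)
              refine Fin.lastCases ?_ (fun j => hxk j) j
              exact h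
            rw [h, mul_zero]; linarith
          · have hmem : -R x / E x ∈ Λ := ⟨x, hxk, h, rfl⟩
            have hle := le_csSup hbdd hmem
            have h2 := (div_le_iff₀ h).mp hle
            linarith
        have hadd2 : ∀ x y, R (x + y) + μ * E (x + y) ≤ (R x + μ * E x) + (R y + μ * E y) := by
          intro x y
          rw [map_add]
          have := hadd x y
          nlinarith [hadd x y]
        have hhom2 : ∀ (c : ℝ), 0 ≤ c → ∀ x, R (c • x) + μ * E (c • x) = c * (R x + μ * E x) := by
          intro c hc x
          rw [hhom c hc, map_smul, smul_eq_mul]; ring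
        obtain ⟨η', hη'⟩ := IH (fun j => e j.castSucc) (fun x => R x + μ * E x) hadd2 hhom2 hkey
        refine ⟨Fin.snoc η' μ, fun x => ?_⟩
        have h := hη' x
        rw [Fin.sum_univ_castSucc]
        simp only [Fin.snoc_castSucc, Fin.snoc_last]
        rw [← hE]
        linarith

lemma farkas_poly : ∀ (m k : ℕ) (l : Fin m → X →ₗ[ℝ] ℝ) (e : Fin k → X →ₗ[ℝ] ℝ) (R : X → ℝ),
    (∀ x y, R (x + y) ≤ R x + R y) →
    (∀ (c : ℝ), 0 ≤ c → ∀ x, R (c • x) = c * R x) →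
    (∀ x, (∀ i, l i x ≤ 0) → (∀ j, e j x = 0) → 0 ≤ R x) →
    ∃ (lam : Fin m → ℝ) (η : Fin k → ℝ), (∀ i, 0 ≤ lam i) ∧
      ∀ x, 0 ≤ R x + (∑ i, lam i * l i x) + ∑ j, η j * e j x := by
  intro m
  induction m with
  | zero =>
      intro k l e R hadd hhom hpos
      obtain ⟨η, hη⟩ := farkas_eq k e R hadd hhom (fun x hx => hpos x (fun i => i.elim0) hx)
      exact ⟨fun i => i.elim0, η, fun i => i.elim0, fun x => by simpa using hη x⟩
  | succ m IH =>
      intro k l e R hadd hhom hpos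
      set g := l (Fin.last m) with hg
      set l' : Fin m → X →ₗ[ℝ] ℝ := fun i => l i.castSucc with hl'
      by_cases hslater : ∃ y, (∀ i, l' i y ≤ 0) ∧ (∀ j, e j y = 0) ∧ g y < 0
      · obtain ⟨y, hyl, hye, hyg⟩ := hslater
        have hRy : 0 ≤ R y := hpos y (fun i => Fin.lastCases (le_of_lt hyg) hyl i) hye
        set Λ : Set ℝ := {r | r = 0 ∨ ∃ z, (∀ i, l' i z ≤ 0) ∧ (∀ j, e j z = 0) ∧
          0 < g z ∧ r = -R z / g z} with hΛ
        have hcross : ∀ z w, (∀ i, l' i z ≤ 0) → (∀ j, e j z = 0) →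
            (∀ i, l' i w ≤ 0) → (∀ j, e j w = 0) → 0 < g z → g w < 0 →
            -R z / g z ≤ R w / (-(g w)) := by
          intro z w hzl hze hwl hwe hz hw
          refine farkas_cross hadd hhom hz hw (hpos _ (fun i => ?_) (fun j => ?_))
          · refine Fin.lastCases ?_ ?_ i
            · show g (g z • w + (-(g w)) • z) ≤ 0
              rw [map_add, map_smul, map_smul, smul_eq_mul, smul_eq_mul]; nlinarith
            · intro i
              show l' i _ ≤ 0
              rw [map_add, map_smul, map_smul, smul_eq_mul, smul_eq_mul]
              have h1 := hzl i; have h2 := hwl i; nlinarith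
          · rw [map_add, map_smul, map_smul, hze j, hwe j, smul_zero, smul_zero, add_zero]
        have hne : Λ.Nonempty := ⟨0, Or.inl rfl⟩
        have hbdd : BddAbove Λ := by
          refine ⟨R y / (-(g y)), ?_⟩
          rintro r (rfl | ⟨z, hzl, hze, hz, rfl⟩)
          · exact div_nonneg hRy (by linarith)
          · exact hcross z y hzl hze hyl hye hz hyg
        set μ := sSup Λ with hμ
        have hμ0 : 0 ≤ μ := le_csSup hbdd (Or.inl rfl)
        have hkey : ∀ x, (∀ i, l' i x ≤ 0) → (∀ j, e j x = 0) → 0 ≤ R x + μ * g x := by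
          intro x hxl hxe
          rcases lt_trichotomy (g x) 0 with h | h | h
          · have hRx : 0 ≤ R x := hpos x (fun i => Fin.lastCases (le_of_lt h) hxl i) hxe
            have hle : μ ≤ R x / (-(g x)) := by
              refine csSup_le hne ?_
              rintro r (rfl | ⟨z, hzl, hze, hz, rfl⟩)
              · exact div_nonneg hRx (by linarith)
              · exact hcross z x hzl hze hxl hxe hz h
            have h2 := (le_div_iff₀ (by linarith : (0:ℝ) < -(g x))).mp hle
            nlinarith
          · have hRx : 0 ≤ R x := hpos x (fun i => Fin.lastCases (le_of_eq h) hxl i) hxe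
            rw [h, mul_zero]; linarith
          · have hmem : -R x / g x ∈ Λ := Or.inr ⟨x, hxl, hxe, h, rfl⟩
            have h2 := (div_le_iff₀ h).mp (le_csSup hbdd hmem)
            linarith
        have hadd2 : ∀ x y', R (x + y') + μ * g (x + y') ≤ (R x + μ * g x) + (R y' + μ * g y') := by
          intro x y'
          rw [map_add]
          nlinarith [hadd x y']
        have hhom2 : ∀ (c : ℝ), 0 ≤ c → ∀ x, R (c • x) + μ * g (c • x) = c * (R x + μ * g x) := by
          intro c hc x
          rw [hhom c hc, map_smul, smul_eq_mul]; ring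
        obtain ⟨lam', η, hlam', hineq⟩ := IH k l' e (fun x => R x + μ * g x) hadd2 hhom2 hkey
        refine ⟨Fin.snoc lam' μ, η, fun i => ?_, fun x => ?_⟩
        · refine Fin.lastCases ?_ ?_ i
          · rw [Fin.snoc_last]; exact hμ0
          · intro i; rw [Fin.snoc_castSucc]; exact hlam' i
        · have h := hineq x
          rw [Fin.sum_univ_castSucc]
          simp only [Fin.snoc_castSucc, Fin.snoc_last]
          rw [← hg]
          linarith
      · push_neg at hslater
        obtain ⟨c, d, hc, hF⟩ := IH k l' e (fun x => g x)
          (fun x y => le_of_eq (map_add g x y))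
          (fun a ha x => by show g (a • x) = a * g x; rw [map_smul, smul_eq_mul]) hslater
        have hF0 : ∀ x, g x + (∑ i, c i * l' i x) + ∑ j, d j * e j x = 0 := by
          intro x
          have h1 := hF x
          have h2 := hF (-x)
          simp only [map_neg, mul_neg, Finset.sum_neg_distrib] at h2
          linarith
        have hpos2 : ∀ x, (∀ i, l' i x ≤ 0) →
            (∀ j : Fin (k + m), Fin.append e (fun i => c i • l' i) j x = 0) → 0 ≤ R x := by
          intro x hxl hxe
          have hek : ∀ j : Fin k, e j x = 0 := fun j => by
            have h := hxe (Fin.castAdd m j); rwa [Fin.append_left] at h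
          have hcl : ∀ i : Fin m, c i * l' i x = 0 := fun i => by
            have h := hxe (Fin.natAdd k i)
            rwa [Fin.append_right, LinearMap.smul_apply, smul_eq_mul] at h
          have hgx : g x = 0 := by
            have h := hF0 x
            rw [Finset.sum_eq_zero (fun i _ => hcl i),
              Finset.sum_eq_zero (fun j _ => by rw [hek j, mul_zero])] at h
            linarith
          exact hpos x (fun i => Fin.lastCases (le_of_eq hgx) hxl i) hek
        obtain ⟨lam', ξ, hlam', hineq⟩ := IH (k + m) l' (Fin.append e (fun i => c i • l' i)) R
          hadd hhom hpos2
        set ξe : Fin k → ℝ := fun j => ξ (Fin.castAdd m j) with hξe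
        set ξc : Fin m → ℝ := fun i => ξ (Fin.natAdd k i) with hξc
        set t : ℝ := ∑ i, max (-(ξc i)) 0 with ht
        have ht0 : 0 ≤ t := Finset.sum_nonneg (fun i _ => le_max_right _ _)
        have hti : ∀ i, -(ξc i) ≤ t := fun i =>
          le_trans (le_max_left _ _)
            (Finset.single_le_sum (f := fun i => max (-(ξc i)) 0)
              (fun i _ => le_max_right _ _) (Finset.mem_univ i))
        set lamn : Fin (m + 1) → ℝ := Fin.snoc (fun i => lam' i + (ξc i + t) * c i) t with hlamn
        refine ⟨lamn, fun j => ξe j + t * d j, fun i => ?_, fun x => ?_⟩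
        · refine Fin.lastCases ?_ ?_ i
          · rw [hlamn, Fin.snoc_last]; exact ht0
          · intro i
            rw [hlamn, Fin.snoc_castSucc]
            exact add_nonneg (hlam' i) (mul_nonneg (by linarith [hti i]) (hc i))
        · have h4 := hineq x
          have h5 : ∑ j : Fin (k + m), ξ j * Fin.append e (fun i => c i • l' i) j x
              = (∑ j, ξe j * e j x) + ∑ i, ξc i * (c i * l' i x) := by
            rw [Fin.sum_univ_add]
            congr 1
            · exact Finset.sum_congr rfl (fun j _ => by rw [Fin.append_left])
            · exact Finset.sum_congr rfl (fun i _ => by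
                rw [Fin.append_right, LinearMap.smul_apply, smul_eq_mul])
          rw [h5] at h4
          have hs1 : ∑ i : Fin (m + 1), lamn i * l i x
              = (∑ i, lam' i * l' i x) + (∑ i, ξc i * (c i * l' i x))
                + t * (∑ i, c i * l' i x) + t * g x := by
            rw [Fin.sum_univ_castSucc]
            simp only [hlamn, Fin.snoc_castSucc, Fin.snoc_last]
            rw [← hg]
            have hterm : ∀ i ∈ (Finset.univ : Finset (Fin m)),
                (lam' i + (ξc i + t) * c i) * l' i x
                  = lam' i * l' i x + ξc i * (c i * l' i x) + t * (c i * l' i x) :=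
              fun i _ => by ring
            rw [Finset.sum_congr rfl hterm, Finset.sum_add_distrib, Finset.sum_add_distrib,
              ← Finset.mul_sum]
          have h8 : ∑ j, (ξe j + t * d j) * e j x
              = (∑ j, ξe j * e j x) + t * ∑ j, d j * e j x := by
            have hterm : ∀ j ∈ (Finset.univ : Finset (Fin k)),
                (ξe j + t * d j) * e j x = ξe j * e j x + t * (d j * e j x) := fun j _ => by ring
            rw [Finset.sum_congr rfl hterm, Finset.sum_add_distrib, ← Finset.mul_sum]
          have h7 : t * g x + t * (∑ i, c i * l' i x) + t * (∑ j, d j * e j x) = 0 := by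
            linear_combination t * hF0 x
          rw [hs1, h8]
          linarith
end Aux


/-- Interval Farkas lemma with a polyhedral sublinear constraint:
`{P ≤ u} ⊆ {Q(−·) ≥ −v}` iff there are `A ∈ ∂P`, `B ∈ ∂Q` and `α ≥ 0` with
`B = α A` and `α u ≤ v`. -/
theorem stmt12 {X : Type*} [AddCommGroup X] [Module ℝ X]
    (N : ℕ) (hN : N ≠ 0) (ℓ : Fin N → X →ₗ[ℝ] ℝ) (P : X → ℝ)
    (hP : ∀ x, P x = Finset.univ.sup'
      (Finset.univ_nonempty_iff.mpr ⟨⟨0, Nat.pos_of_ne_zero hN⟩⟩)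
      (fun i => ℓ i x))
    (Q : X → ℝ)
    (hQadd : ∀ x y, Q (x + y) ≤ Q x + Q y)
    (hQhom : ∀ (c : ℝ), 0 ≤ c → ∀ x, Q (c • x) = c * Q x)
    (u v : ℝ) (hfeas : ∃ x, P x ≤ u) :
    ({x | P x ≤ u} ⊆ {x | -v ≤ Q (-x)}) ↔
      ∃ (A B : X →ₗ[ℝ] ℝ) (α : ℝ),
        (∀ x, A x ≤ P x) ∧ (∀ x, B x ≤ Q x) ∧
        0 ≤ α ∧ B = α • A ∧ α * u ≤ v := by
  have hPle : ∀ (x : X) (b : ℝ), (∀ i, ℓ i x ≤ b) → P x ≤ b := by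
    intro x b hb; rw [hP]; exact Finset.sup'_le _ _ (fun i _ => hb i)
  have hleP : ∀ (x : X) (i : Fin N), ℓ i x ≤ P x := by
    intro x i; rw [hP]; exact Finset.le_sup' (fun i => ℓ i x) (Finset.mem_univ i)
  have hQ0 : Q 0 = 0 := by
    have h := hQhom 0 le_rfl 0; rw [zero_smul, zero_mul] at h; exact h
  constructor
  · intro hsub
    obtain ⟨x₀, hx₀⟩ := hfeas
    have hQx₀ : -v ≤ Q (-x₀) := hsub hx₀
    set L : Fin (N + 1) → (X × ℝ) →ₗ[ℝ] ℝ :=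
      Fin.snoc (fun i => (ℓ i).comp (LinearMap.fst ℝ X ℝ) - u • (LinearMap.snd ℝ X ℝ))
        (-(LinearMap.snd ℝ X ℝ)) with hL
    set R : X × ℝ → ℝ := fun p => Q (-p.1) + p.2 * v with hR
    have hRadd : ∀ p q : X × ℝ, R (p + q) ≤ R p + R q := by
      intro p q
      show Q (-(p.1 + q.1)) + (p.2 + q.2) * v ≤ (Q (-p.1) + p.2 * v) + (Q (-q.1) + q.2 * v)
      rw [neg_add]
      have := hQadd (-p.1) (-q.1)
      linarith
    have hRhom : ∀ (c : ℝ), 0 ≤ c → ∀ p : X × ℝ, R (c • p) = c * R p := by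
      intro c hc p
      show Q (-(c • p.1)) + (c * p.2) * v = c * (Q (-p.1) + p.2 * v)
      rw [← smul_neg, hQhom c hc]; ring
    have hpos : ∀ p : X × ℝ, (∀ i, L i p ≤ 0) → 0 ≤ R p := by
      intro p hp
      have ht : 0 ≤ p.2 := by
        have h := hp (Fin.last N)
        rw [hL, Fin.snoc_last] at h
        simpa using h
      have hli : ∀ i : Fin N, ℓ i p.1 ≤ u * p.2 := by
        intro i
        have h := hp i.castSucc
        rw [hL, Fin.snoc_castSucc] at h
        simp only [LinearMap.sub_apply, LinearMap.comp_apply, LinearMap.fst_apply,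
          LinearMap.smul_apply, LinearMap.snd_apply, smul_eq_mul] at h
        linarith
      rcases ht.eq_or_lt with h0 | hpos'
      · have hPx : P p.1 ≤ 0 := by
          refine hPle _ _ (fun i => ?_)
          have h := hli i; rw [← h0, mul_zero] at h; exact h
        have hQx : 0 ≤ Q (-p.1) := by
          by_contra hneg
          push_neg at hneg
          set cc := (v + Q (-x₀) + 1) / (-(Q (-p.1))) with hcc
          have hccpos : (0:ℝ) < cc := div_pos (by linarith) (by linarith)
          have hfeas2 : P (x₀ + cc • p.1) ≤ u := by
            refine hPle _ _ (fun i => ?_)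
            rw [map_add, map_smul, smul_eq_mul]
            have h1 := hleP x₀ i
            have h2 := hleP p.1 i
            nlinarith
          have h3 : -v ≤ Q (-(x₀ + cc • p.1)) := hsub hfeas2
          have h4 : Q (-(x₀ + cc • p.1)) ≤ Q (-x₀) + cc * Q (-p.1) := by
            rw [neg_add, ← smul_neg]
            calc Q (-x₀ + cc • (-p.1)) ≤ Q (-x₀) + Q (cc • (-p.1)) := hQadd _ _
              _ = Q (-x₀) + cc * Q (-p.1) := by rw [hQhom cc hccpos.le]
          have h5 : cc * Q (-p.1) = -(v + Q (-x₀) + 1) := by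
            rw [hcc, div_mul_eq_mul_div, div_eq_iff (by linarith : -Q (-p.1) ≠ 0)]
            ring
          linarith
        show 0 ≤ Q (-p.1) + p.2 * v
        rw [← h0, zero_mul, add_zero]; exact hQx
      · have hfe : P (p.2⁻¹ • p.1) ≤ u := by
          refine hPle _ _ (fun i => ?_)
          rw [map_smul, smul_eq_mul]
          have h1 : p.2⁻¹ * ℓ i p.1 ≤ p.2⁻¹ * (u * p.2) :=
            mul_le_mul_of_nonneg_left (hli i) (inv_nonneg.mpr ht)
          have h2 : p.2⁻¹ * (u * p.2) = u := by
            field_simp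
          linarith
        have h6 : -v ≤ Q (-(p.2⁻¹ • p.1)) := hsub hfe
        have h7 : Q (-(p.2⁻¹ • p.1)) = p.2⁻¹ * Q (-p.1) := by
          rw [← smul_neg, hQhom _ (inv_nonneg.mpr ht)]
        rw [h7] at h6
        have h8 := mul_le_mul_of_nonneg_left h6 ht
        rw [mul_inv_cancel_left₀ (ne_of_gt hpos')] at h8
        show 0 ≤ Q (-p.1) + p.2 * v
        nlinarith
    obtain ⟨lam, η, hlam, hkey⟩ := farkas_poly (N + 1) 0 L (fun j => j.elim0) R hRadd hRhom
      (fun p hp _ => hpos p hp)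
    have hkey' : ∀ p : X × ℝ, 0 ≤ R p + ∑ i, lam i * L i p := by
      intro p; have h := hkey p; simpa using h
    set lam' : Fin N → ℝ := fun i => lam i.castSucc with hlam'
    set μ := lam (Fin.last N) with hμ
    have hμ0 : 0 ≤ μ := hlam _
    set α := ∑ i, lam' i with hα
    have hα0 : 0 ≤ α := Finset.sum_nonneg (fun i _ => hlam _)
    set Bm : X →ₗ[ℝ] ℝ := ∑ i, lam' i • ℓ i with hBm
    have hBmx : ∀ x : X, Bm x = ∑ i, lam' i * ℓ i x := by
      intro x
      rw [hBm, LinearMap.coe_sum, Finset.sum_apply]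
      exact Finset.sum_congr rfl (fun i _ => by rw [LinearMap.smul_apply, smul_eq_mul])
    have hsumL : ∀ (x : X) (s : ℝ), ∑ i, lam i * L i (x, s)
        = (∑ i, lam' i * ℓ i x) - α * (u * s) - μ * s := by
      intro x s
      rw [Fin.sum_univ_castSucc]
      simp only [hL, Fin.snoc_castSucc, Fin.snoc_last, LinearMap.sub_apply,
        LinearMap.comp_apply, LinearMap.fst_apply, LinearMap.smul_apply, LinearMap.snd_apply,
        LinearMap.neg_apply, smul_eq_mul]
      have hterm : ∀ i ∈ (Finset.univ : Finset (Fin N)),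
          lam i.castSucc * (ℓ i x - u * s) = lam' i * ℓ i x - lam' i * (u * s) :=
        fun i _ => by rw [hlam']; ring
      rw [Finset.sum_congr rfl hterm, Finset.sum_sub_distrib, ← Finset.sum_mul]
      rw [← hα]
      ring
    have hQB : ∀ x : X, 0 ≤ Q (-x) + Bm x := by
      intro x
      have h := hkey' (x, 0)
      rw [hsumL x 0] at h
      have hR0 : R (x, 0) = Q (-x) := by rw [hR]; simp
      rw [hR0] at h
      rw [hBmx]
      linarith
    have hBQ : ∀ y : X, Bm y ≤ Q y := by
      intro y
      have h := hQB (-y)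
      rw [neg_neg, map_neg] at h
      linarith
    have hαμ : α * u + μ = v := by
      have h1 := hkey' (0, 1)
      have h2 := hkey' (0, -1)
      rw [hsumL 0 1] at h1
      rw [hsumL 0 (-1)] at h2
      have hz : ∀ i, lam' i * ℓ i (0 : X) = 0 := fun i => by rw [map_zero, mul_zero]
      rw [Finset.sum_eq_zero (fun i _ => hz i)] at h1 h2
      have hR1 : R ((0 : X), 1) = v := by rw [hR]; simp [hQ0]
      have hR2 : R ((0 : X), -1) = -v := by rw [hR]; simp [hQ0]
      rw [hR1] at h1; rw [hR2] at h2
      linarith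
    rcases hα0.eq_or_lt with hz | hpos'
    · -- α = 0, all lam' vanish
      have hall : ∀ i, lam' i = 0 := by
        intro i
        have := (Finset.sum_eq_zero_iff_of_nonneg (fun i _ => hlam (Fin.castSucc i))).mp hz.symm
        exact this i (Finset.mem_univ i)
      have hBm0 : Bm = 0 := by
        rw [hBm]
        refine Finset.sum_eq_zero (fun i _ => by rw [hall i, zero_smul])
      refine ⟨ℓ ⟨0, Nat.pos_of_ne_zero hN⟩, Bm, 0, fun x => hleP x _, hBQ, le_rfl, ?_, ?_⟩
      · rw [hBm0, zero_smul]
      · have hau : α * u = 0 := by rw [← hz, zero_mul]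
        rw [zero_mul]; linarith
    · refine ⟨α⁻¹ • Bm, Bm, α, ?_, hBQ, hα0, ?_, by linarith⟩
      · intro x
        have h1 : Bm x ≤ α * P x := by
          rw [hBmx]
          calc ∑ i, lam' i * ℓ i x ≤ ∑ i, lam' i * P x :=
                Finset.sum_le_sum (fun i _ =>
                  mul_le_mul_of_nonneg_left (hleP x i) (hlam _))
            _ = α * P x := by rw [← Finset.sum_mul]
        have h2 : α⁻¹ * Bm x ≤ α⁻¹ * (α * P x) :=
          mul_le_mul_of_nonneg_left h1 (inv_nonneg.mpr hα0)
        rw [inv_mul_cancel_left₀ (ne_of_gt hpos')] at h2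
        simpa using h2
      · rw [smul_smul, mul_inv_cancel₀ (ne_of_gt hpos'), one_smul]
  · rintro ⟨A, B, α, hA, hB, hα, hBA, hαu⟩ x hx
    have h1 : B (-x) ≤ Q (-x) := hB _
    have h2 : B (-x) = -(α * A x) := by
      rw [hBA, map_neg, LinearMap.smul_apply, smul_eq_mul]
    have h3 : A x ≤ P x := hA x
    have h4 : α * A x ≤ α * u := mul_le_mul_of_nonneg_left (le_trans h3 hx) hα
    show -v ≤ Q (-x)
    linarith
end

section
/- Polyhedral Lagrange principle (scalar case): let X be a real vector space, P₁, …, P_N : X → ℝ polyhedral sublinear functionals, P : X → ℝ a sublinear functional, and u₁, …, u_N ∈ ℝ such that the feasible set { x : Pᵢ(x) ≤ uᵢ for all i } is nonempty and inf { P(x) : Pᵢ(x) ≤ uᵢ ∀i } = μ > −∞. Then there exist scalars λ₁, …, λ_N ≥ 0 such that inf_{x ∈ X} ( P(x) + Σᵢ λᵢ (Pᵢ(x) − uᵢ) ) = μ. -/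
open Finset RealInnerProductSpace

/-- One exchange step: if there is a nontrivial nonnegative-somewhere relation among
the generators indexed by `t`, we can rewrite the conic combination over a strictly
smaller support. -/
private lemma cone_exchange {H : Type*} [AddCommGroup H] [Module ℝ H] {ι : Type*}
    [DecidableEq ι] (a : ι → H) (t : Finset ι) (c : ι → ℝ) (hc : ∀ i ∈ t, 0 ≤ c i)
    (d : ι → ℝ) (hd0 : ∑ i ∈ t, d i • a i = 0) (i₁ : ι) (hi₁t : i₁ ∈ t) (hi₁ : 0 < d i₁) :
    ∃ (i₀ : ι) (_ : i₀ ∈ t) (c' : ι → ℝ), (∀ i ∈ t.erase i₀, 0 ≤ c' i) ∧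
      ∑ i ∈ t.erase i₀, c' i • a i = ∑ i ∈ t, c i • a i := by
  classical
  set T : Finset ι := t.filter (fun i => 0 < d i) with hT
  have hTne : T.Nonempty := ⟨i₁, by simp [hT, hi₁t, hi₁]⟩
  obtain ⟨i₀, hi₀T, hmin⟩ := T.exists_min_image (fun i => c i / d i) hTne
  have hi₀t : i₀ ∈ t := (Finset.mem_filter.mp hi₀T).1
  have hdi₀ : 0 < d i₀ := (Finset.mem_filter.mp hi₀T).2
  set r : ℝ := c i₀ / d i₀ with hr
  have hrnn : 0 ≤ r := div_nonneg (hc i₀ hi₀t) hdi₀.le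
  refine ⟨i₀, hi₀t, fun i => c i - r * d i, ?_, ?_⟩
  · intro i hi
    show 0 ≤ c i - r * d i
    have hit : i ∈ t := Finset.mem_of_mem_erase hi
    by_cases hdi : 0 < d i
    · have hiT : i ∈ T := Finset.mem_filter.mpr ⟨hit, hdi⟩
      have := hmin i hiT
      have : r * d i ≤ c i := by
        rw [hr]
        exact (le_div_iff₀ hdi).mp this
      linarith
    · push_neg at hdi
      nlinarith [hc i hit, mul_nonpos_of_nonneg_of_nonpos hrnn hdi]
  · have hzero : c i₀ - r * d i₀ = 0 := by
      rw [hr, div_mul_cancel₀ _ hdi₀.ne', sub_self]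
    have h1 : ∑ i ∈ t.erase i₀, (c i - r * d i) • a i
        = ∑ i ∈ t, (c i - r * d i) • a i :=
      Finset.sum_erase _ (by rw [hzero, zero_smul])
    rw [h1]
    have : ∑ i ∈ t, (c i - r * d i) • a i
        = ∑ i ∈ t, c i • a i - r • ∑ i ∈ t, d i • a i := by
      rw [Finset.smul_sum, ← Finset.sum_sub_distrib]
      congr 1; funext i
      rw [sub_smul, smul_smul]
    rw [this, hd0, smul_zero, sub_zero]

/-- Conic Carathéodory: any conic combination can be rewritten as a conic combination
over a linearly independent subfamily. -/
private lemma cone_caratheodory {H : Type*} [AddCommGroup H] [Module ℝ H] {ι : Type*}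
    [DecidableEq ι] (a : ι → H) :
    ∀ (n : ℕ) (t : Finset ι), t.card ≤ n → ∀ (c : ι → ℝ), (∀ i ∈ t, 0 ≤ c i) →
    ∃ (t' : Finset ι) (c' : ι → ℝ), (∀ i ∈ t', 0 ≤ c' i) ∧
      LinearIndependent ℝ (fun i : t' => a (i : ι)) ∧
      ∑ i ∈ t', c' i • a i = ∑ i ∈ t, c i • a i := by
  intro n
  induction n with
  | zero =>
    intro t ht c hc
    have : t = ∅ := Finset.card_eq_zero.mp (Nat.le_zero.mp ht)
    subst this
    exact ⟨∅, c, by simp, linearIndependent_empty_type, rfl⟩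
  | succ n ih =>
    intro t ht c hc
    by_cases hli : LinearIndependent ℝ (fun i : t => a (i : ι))
    · exact ⟨t, c, hc, hli, rfl⟩
    · obtain ⟨g, hg0, i₁, hgi₁⟩ := Fintype.not_linearIndependent_iff.mp hli
      set d : ι → ℝ := fun i => if h : i ∈ t then g ⟨i, h⟩ else 0 with hd
      have hsum : ∑ i ∈ t, d i • a i = 0 := by
        rw [← Finset.sum_coe_sort t (fun i => d i • a i)]
        rw [← hg0]
        congr 1; funext i
        simp [hd, i.2]
      have hd1 : d (i₁ : ι) = g i₁ := by simp [hd, i₁.2]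
      have hstep : ∃ (i₀ : ι) (_ : i₀ ∈ t) (c' : ι → ℝ),
          (∀ i ∈ t.erase i₀, 0 ≤ c' i) ∧
          ∑ i ∈ t.erase i₀, c' i • a i = ∑ i ∈ t, c i • a i := by
        rcases lt_or_gt_of_ne hgi₁ with hneg | hpos
        · have hsum' : ∑ i ∈ t, (-d) i • a i = 0 := by
            simp only [Pi.neg_apply, neg_smul, Finset.sum_neg_distrib, hsum, neg_zero]
          exact cone_exchange a t c hc (-d) hsum' i₁ i₁.2
            (by simp [hd1]; linarith)
        · exact cone_exchange a t c hc d hsum i₁ i₁.2 (by rw [hd1]; exact hpos)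
      obtain ⟨i₀, hi₀, c', hc', hsum'⟩ := hstep
      have hcard : (t.erase i₀).card ≤ n := by
        have := Finset.card_erase_of_mem hi₀
        omega
      obtain ⟨t', c'', h1, h2, h3⟩ := ih (t.erase i₀) hcard c' hc'
      exact ⟨t', c'', h1, h2, by rw [h3, hsum']⟩

private lemma cone_isClosed {ι : Type*} [Fintype ι] [DecidableEq ι] {H : Type*}
    [NormedAddCommGroup H] [InnerProductSpace ℝ H] [FiniteDimensional ℝ H] (a : ι → H) :
    IsClosed {x : H | ∃ c : ι → ℝ, (∀ i, 0 ≤ c i) ∧ x = ∑ i, c i • a i} := by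
  classical
  have key : {x : H | ∃ c : ι → ℝ, (∀ i, 0 ≤ c i) ∧ x = ∑ i, c i • a i}
      = ⋃ (t : Finset ι), ⋃ (_ : LinearIndependent ℝ (fun i : t => a (i : ι))),
        (fun c : (t → ℝ) => ∑ i : t, c i • a (i : ι)) '' {c | ∀ i, 0 ≤ c i} := by
    ext x
    constructor
    · rintro ⟨c, hc, rfl⟩
      obtain ⟨t', c', h1, h2, h3⟩ := cone_caratheodory a (Finset.univ.card)
        Finset.univ le_rfl c (fun i _ => hc i)
      refine Set.mem_iUnion.mpr ⟨t', Set.mem_iUnion.mpr ⟨h2, ⟨fun i => c' i, fun i => h1 i i.2, ?_⟩⟩⟩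
      show (∑ i : t', c' (i : ι) • a (i : ι)) = ∑ i : ι, c i • a i
      rw [Finset.sum_coe_sort t' (fun i => c' i • a i), h3]
    · intro hx
      obtain ⟨t, ht⟩ := Set.mem_iUnion.mp hx
      obtain ⟨hli, c, hc, rfl⟩ := Set.mem_iUnion.mp ht
      refine ⟨fun i => if h : i ∈ t then c ⟨i, h⟩ else 0, ?_, ?_⟩
      · intro i
        by_cases h : i ∈ t
        · simpa [h] using hc ⟨i, h⟩
        · simp [h]
      · show (∑ i : t, c i • a (i : ι)) = _
        have hz : ∀ i ∈ Finset.univ, i ∉ t →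
            (if h : i ∈ t then c ⟨i, h⟩ else 0) • a i = 0 := by
          intro i _ hi; simp [hi]
        rw [← Finset.sum_subset (Finset.subset_univ t) hz]
        rw [← Finset.sum_coe_sort t (fun i => (if h : i ∈ t then c ⟨i, h⟩ else 0) • a i)]
        congr 1; funext i
        simp [i.2]
  rw [key]
  apply isClosed_iUnion_of_finite
  intro t
  apply isClosed_iUnion_of_finite
  intro hli
  set L : (↥t → ℝ) →ₗ[ℝ] H :=
    { toFun := fun c => ∑ i : t, c i • a (i : ι)
      map_add' := by
        intro c c'; simp [add_smul, Finset.sum_add_distrib]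
      map_smul' := by
        intro m c; simp [smul_smul, Finset.smul_sum] } with hL
  have hker : LinearMap.ker L = ⊥ := by
    rw [LinearMap.ker_eq_bot']
    intro c hc
    have := Fintype.linearIndependent_iff.mp hli c hc
    funext i; exact this i
  have hemb := LinearMap.isClosedEmbedding_of_injective hker
  have hclosed : IsClosed {c : ↥t → ℝ | ∀ i, 0 ≤ c i} := by
    have : {c : ↥t → ℝ | ∀ i, 0 ≤ c i} = ⋂ i, {c | 0 ≤ c i} := by
      ext c; simp [Set.mem_iInter]
    rw [this]
    exact isClosed_iInter fun i => isClosed_le continuous_const (continuous_apply i)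
  exact hemb.isClosedMap _ hclosed

/-- Farkas' lemma in a finite-dimensional real inner product space. -/
private lemma farkas_inner {ι : Type*} [Fintype ι] [DecidableEq ι] {H : Type*}
    [NormedAddCommGroup H] [InnerProductSpace ℝ H] [FiniteDimensional ℝ H]
    (a : ι → H) (b : H)
    (hyp : ∀ y : H, (∀ i, ⟪a i, y⟫ ≤ 0) → ⟪b, y⟫ ≤ 0) :
    ∃ c : ι → ℝ, (∀ i, 0 ≤ c i) ∧ b = ∑ i, c i • a i := by
  classical
  by_contra hb
  push_neg at hb
  set K : ConvexCone ℝ H :=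
    { carrier := {x : H | ∃ c : ι → ℝ, (∀ i, 0 ≤ c i) ∧ x = ∑ i, c i • a i}
      smul_mem' := by
        rintro r hr x ⟨c, hc, rfl⟩
        exact ⟨fun i => r * c i, fun i => mul_nonneg hr.le (hc i),
          by rw [Finset.smul_sum]; congr 1; funext i; rw [smul_smul]⟩
      add_mem' := by
        rintro x ⟨c, hc, rfl⟩ y ⟨c', hc', rfl⟩
        exact ⟨fun i => c i + c' i, fun i => add_nonneg (hc i) (hc' i),
          by rw [← Finset.sum_add_distrib]; congr 1; funext i; rw [add_smul]⟩ } with hK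
  have hbK : b ∉ K := by
    intro hmem
    obtain ⟨c, hc, hrep⟩ := hmem
    exact (hb c hc) hrep
  obtain ⟨y, hy1, hy2⟩ := ProperCone.hyperplane_separation' (x₀ := b)
    (⟨K.toPointedCone ⟨fun _ => 0, fun i => le_rfl, by simp⟩, cone_isClosed a⟩ : ProperCone ℝ H) hbK
  have hai : ∀ i, ⟪a i, -y⟫ ≤ 0 := by
    intro i
    have hmem : a i ∈ K := ⟨Pi.single i 1, fun j => by
        by_cases h : j = i <;> simp [Pi.single_apply, h], by
        simp [Pi.single_apply, ite_smul]⟩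
    have := hy1 (a i) hmem
    rw [inner_neg_right]; linarith
  have hb2 := hyp (-y) hai
  rw [inner_neg_right] at hb2
  linarith

/-- Farkas' lemma for finitely many linear functionals on an arbitrary real
vector space. -/
private lemma farkas_linear {X : Type*} [AddCommGroup X] [Module ℝ X] {ι : Type*}
    [Fintype ι] [DecidableEq ι] (g : ι → X →ₗ[ℝ] ℝ) (h : X →ₗ[ℝ] ℝ)
    (hyp : ∀ y, (∀ i, g i y ≤ 0) → h y ≤ 0) :
    ∃ ν : ι → ℝ, (∀ i, 0 ≤ ν i) ∧ ∀ y, h y = ∑ i, ν i * g i y := by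
  classical
  set E := EuclideanSpace ℝ ι
  set Ψ : X →ₗ[ℝ] E :=
    (WithLp.linearEquiv 2 ℝ (ι → ℝ)).symm.toLinearMap ∘ₗ LinearMap.pi g with hΨ
  have hΨapp : ∀ (x : X) (i : ι), Ψ x i = g i x := by
    intro x i; rfl
  set V : Submodule ℝ E := LinearMap.range Ψ with hV
  have hker : LinearMap.ker Ψ ≤ LinearMap.ker h := by
    intro y hy
    rw [LinearMap.mem_ker] at hy ⊢
    have hgy : ∀ i, g i y = 0 := by
      intro i; rw [← hΨapp y i, hy]; rfl
    have h1 := hyp y (fun i => (hgy i).le)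
    have h2 := hyp (-y) (fun i => by rw [map_neg, hgy i, neg_zero])
    rw [map_neg] at h2
    linarith
  set h' : X ⧸ LinearMap.ker Ψ →ₗ[ℝ] ℝ := (LinearMap.ker Ψ).liftQ h hker with hh'
  set e := Ψ.quotKerEquivRange with he
  set hbar : V →ₗ[ℝ] ℝ := h' ∘ₗ (e.symm : ↥(LinearMap.range Ψ) →ₗ[ℝ] X ⧸ LinearMap.ker Ψ) with hhbar
  set htil : E →ₗ[ℝ] ℝ := hbar ∘ₗ (V.orthogonalProjectionOnto).toLinearMap with hhtil
  have hcomp : ∀ x : X, htil (Ψ x) = h x := by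
    intro x
    have hmem : Ψ x ∈ V := LinearMap.mem_range_self Ψ x
    have hproj : V.orthogonalProjectionOnto (Ψ x) = ⟨Ψ x, hmem⟩ := by
      exact Submodule.orthogonalProjectionOnto_mem_subspace_eq_self (⟨Ψ x, hmem⟩ : V)
    have hsymm : e.symm ⟨Ψ x, hmem⟩ = Submodule.Quotient.mk x := by
      rw [LinearEquiv.symm_apply_eq]
      exact Subtype.ext (Ψ.quotKerEquivRange_apply_mk x).symm
    show hbar (V.orthogonalProjectionOnto (Ψ x)) = h x
    rw [hproj]
    show h' (e.symm ⟨Ψ x, hmem⟩) = h x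
    rw [hsymm]
    exact Submodule.liftQ_apply _ h x
  -- Riesz vector for htil
  set b : E := (InnerProductSpace.toDual ℝ E).symm (LinearMap.toContinuousLinearMap htil) with hb
  have hbin : ∀ y : E, ⟪b, y⟫ = htil y := by
    intro y
    rw [hb, InnerProductSpace.toDual_symm_apply]
    rfl
  -- basis of the orthogonal complement
  set m := Module.finrank ℝ ↥Vᗮ
  set B := Module.finBasis ℝ ↥Vᗮ with hB
  set w : Fin m → E := fun k => (B k : E) with hw
  have hwmem : ∀ k, w k ∈ Vᗮ := fun k => (B k).2
  -- combined constraint family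
  set a : (ι ⊕ (Fin m ⊕ Fin m)) → E := fun j =>
    Sum.elim (fun i => EuclideanSpace.single i (1:ℝ)) (Sum.elim w (fun k => -w k)) j with ha
  have key : ∀ y : E, (∀ j, ⟪a j, y⟫ ≤ 0) → ⟪b, y⟫ ≤ 0 := by
    intro y hy
    have hw0 : ∀ k, ⟪w k, y⟫ = 0 := by
      intro k
      have h1 := hy (Sum.inr (Sum.inl k))
      have h2 := hy (Sum.inr (Sum.inr k))
      simp only [ha, Sum.elim_inr, Sum.elim_inl, inner_neg_left] at h1 h2
      linarith
    have hyV : y ∈ V := by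
      rw [← Submodule.orthogonal_orthogonal V]
      intro v hv
      -- v ∈ Vᗮ; show ⟪v, y⟫ = 0
      have hrep := B.sum_repr ⟨v, hv⟩
      have hv2 : v = ∑ k, (B.repr ⟨v, hv⟩ k) • w k := by
        have h3 := congrArg (Subtype.val) hrep
        rw [Submodule.coe_sum] at h3
        simp only [SetLike.val_smul] at h3
        simp only [hw]
        exact h3.symm
      rw [hv2, sum_inner]
      refine Finset.sum_eq_zero fun k _ => ?_
      rw [real_inner_smul_left, hw0 k, mul_zero]
    obtain ⟨x, rfl⟩ := hyV
    have hcoord : ∀ i, g i x ≤ 0 := by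
      intro i
      have := hy (Sum.inl i)
      simp only [ha, Sum.elim_inl] at this
      rw [EuclideanSpace.inner_single_left] at this
      simpa [hΨapp] using this
    rw [hbin, hcomp]
    exact hyp x hcoord
  obtain ⟨c, hc, hrep⟩ := farkas_inner a b key
  refine ⟨fun i => c (Sum.inl i), fun i => hc _, fun x => ?_⟩
  have h1 : h x = ⟪b, Ψ x⟫ := by rw [hbin, hcomp]
  rw [h1, hrep, sum_inner]
  rw [Fintype.sum_sum_type]
  have h2 : ∀ k : Fin m ⊕ Fin m, ⟪c (Sum.inr k) • a (Sum.inr k), Ψ x⟫ = 0 := by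
    intro k
    have hmem : Ψ x ∈ V := LinearMap.mem_range_self Ψ x
    have hz : ∀ k', ⟪w k', Ψ x⟫ = 0 := fun k' => by
      rw [real_inner_comm]
      exact (Submodule.mem_orthogonal V (w k')).mp (hwmem k') (Ψ x) hmem
    rcases k with k | k
    · simp only [ha, Sum.elim_inr, Sum.elim_inl, real_inner_smul_left, hz, mul_zero]
    · simp only [ha, Sum.elim_inr, Sum.elim_inl, real_inner_smul_left, inner_neg_left,
        hz, neg_zero, mul_zero]
  rw [Finset.sum_congr rfl (fun k _ => h2 k), Finset.sum_const, smul_zero, add_zero]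
  congr 1
  funext i
  rw [real_inner_smul_left]
  simp only [ha, Sum.elim_inl]
  rw [EuclideanSpace.inner_single_left]
  simp [hΨapp]

/-- Homogeneous polyhedral Lagrange lemma: a sublinear functional nonnegative on a
polyhedral cone admits nonnegative multipliers making it globally nonnegative. -/
private lemma sublinear_polyhedral_nonneg {Y : Type*} [AddCommGroup Y] [Module ℝ Y]
    {ι : Type*} [Fintype ι] [DecidableEq ι]
    (g : ι → Y →ₗ[ℝ] ℝ) (Q : Y → ℝ)
    (hQadd : ∀ x y, Q (x + y) ≤ Q x + Q y)
    (hQhom : ∀ c : ℝ, 0 ≤ c → ∀ x, Q (c • x) = c * Q x)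
    (hQC : ∀ y, (∀ i, g i y ≤ 0) → 0 ≤ Q y) :
    ∃ ν : ι → ℝ, (∀ i, 0 ≤ ν i) ∧ ∀ y, 0 ≤ Q y + ∑ i, ν i * g i y := by
  classical
  have hQ0 : Q 0 = 0 := by
    have := hQhom 0 le_rfl 0
    simpa using this
  set C : Set Y := {y | ∀ i, g i y ≤ 0} with hC
  have hC0 : (0 : Y) ∈ C := fun i => by simp
  have hCadd : ∀ {y z : Y}, y ∈ C → z ∈ C → y + z ∈ C := by
    intro y z hy hz i; rw [map_add]; exact add_nonpos (hy i) (hz i)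
  have hCsmul : ∀ {c : ℝ}, 0 ≤ c → ∀ {z : Y}, z ∈ C → c • z ∈ C := by
    intro c hc z hz i; rw [map_smul]; exact mul_nonpos_of_nonneg_of_nonpos hc (hz i)
  set S : Y → Set ℝ := fun y => (fun z => Q (y + z)) '' C with hS
  have hSne : ∀ y, (S y).Nonempty := fun y => ⟨Q (y + 0), ⟨0, hC0, rfl⟩⟩
  have hSbdd : ∀ y, BddBelow (S y) := by
    intro y
    refine ⟨-Q (-y), ?_⟩
    rintro r ⟨z, hz, rfl⟩
    have h1 : Q z ≤ Q (y + z) + Q (-y) := by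
      have := hQadd (y + z) (-y)
      have he : y + z + -y = z := by abel
      rwa [he] at this
    have h2 : 0 ≤ Q z := hQC z hz
    linarith
  set R : Y → ℝ := fun y => sInf (S y) with hR
  have hRle : ∀ y, R y ≤ Q y := by
    intro y
    have : Q (y + 0) ∈ S y := ⟨0, hC0, rfl⟩
    rw [add_zero] at this
    exact csInf_le (hSbdd y) this
  have hRmem : ∀ y z, z ∈ C → R y ≤ Q (y + z) :=
    fun y z hz => csInf_le (hSbdd y) ⟨z, hz, rfl⟩
  have hRadd : ∀ x y, R (x + y) ≤ R x + R y := by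
    intro x y
    have key : ∀ a ∈ S x, ∀ b ∈ S y, R (x + y) ≤ a + b := by
      rintro a ⟨z₁, hz₁, rfl⟩ b ⟨z₂, hz₂, rfl⟩
      have h1 : R (x + y) ≤ Q (x + y + (z₁ + z₂)) := hRmem _ _ (hCadd hz₁ hz₂)
      have he : x + y + (z₁ + z₂) = (x + z₁) + (y + z₂) := by abel
      rw [he] at h1
      exact h1.trans (hQadd _ _)
    have step1 : ∀ a ∈ S x, R (x + y) - a ≤ R y := by
      intro a ha
      exact le_csInf (hSne y) (fun b hb => by linarith [key a ha b hb])
    have step2 : R (x + y) - R y ≤ R x := by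
      apply le_csInf (hSne x)
      intro a ha
      linarith [step1 a ha]
    linarith
  have hRhom : ∀ c : ℝ, 0 < c → ∀ y, R (c • y) = c * R y := by
    intro c hc y
    apply le_antisymm
    · rw [← div_le_iff₀' hc]
      apply le_csInf (hSne y)
      rintro b ⟨z, hz, rfl⟩
      rw [div_le_iff₀' hc]
      have h1 : R (c • y) ≤ Q (c • y + c • z) := hRmem _ _ (hCsmul hc.le hz)
      rw [← smul_add, hQhom c hc.le] at h1
      exact h1
    · apply le_csInf (hSne (c • y))
      rintro b ⟨z, hz, rfl⟩
      have h1 : R y ≤ Q (y + c⁻¹ • z) := hRmem _ _ (hCsmul (by positivity) hz)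
      have h2 : c * R y ≤ c * Q (y + c⁻¹ • z) := by
        exact mul_le_mul_of_nonneg_left h1 hc.le
      rw [← hQhom c hc.le, smul_add, smul_smul, mul_inv_cancel₀ hc.ne', one_smul] at h2
      exact h2
  -- Hahn–Banach: a linear functional below R
  set f : Y →ₗ.[ℝ] ℝ := { domain := ⊥, toFun := 0 } with hf
  have hfR : ∀ x : f.domain, f x ≤ R ↑x := by
    rintro ⟨x, hx⟩
    have hx0 : x = 0 := by simpa [hf] using hx
    subst hx0
    show (0 : ℝ) ≤ R 0
    exact le_csInf (hSne 0) (by rintro b ⟨z, hz, rfl⟩; show 0 ≤ Q (0 + z); rw [zero_add]; exact hQC z hz)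
  obtain ⟨φ, -, hφ⟩ := exists_extension_of_le_sublinear f R hRhom hRadd hfR
  have hφQ : ∀ y, φ y ≤ Q y := fun y => (hφ y).trans (hRle y)
  have hφC : ∀ z ∈ C, 0 ≤ φ z := by
    intro z hz
    have h1 : φ (-z) ≤ R (-z) := hφ (-z)
    have h2 : R (-z) ≤ Q (-z + z) := hRmem _ _ hz
    rw [neg_add_cancel, hQ0] at h2
    rw [map_neg] at h1
    linarith
  obtain ⟨ν, hν, hrep⟩ := farkas_linear g (-φ) (by
    intro y hy
    have := hφC y hy
    simp only [LinearMap.neg_apply]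
    linarith)
  refine ⟨ν, hν, fun y => ?_⟩
  have h1 := hrep y
  simp only [LinearMap.neg_apply] at h1
  have h2 := hφQ y
  linarith

/-- Polyhedral Lagrange principle (scalar case): if the constraints are
polyhedral sublinear functionals and the constrained infimum is `μ`, then some
nonnegative Lagrange multipliers make the unconstrained infimum of the
Lagrangian equal to `μ`. -/
theorem stmt13 {X : Type*} [AddCommGroup X] [Module ℝ X]
    (N : ℕ) (Pc : Fin N → X → ℝ)
    (hpoly : ∀ i, ∃ (s : Finset (X →ₗ[ℝ] ℝ)) (hs : s.Nonempty),
      ∀ x, Pc i x = s.sup' hs fun l => l x)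
    (P : X → ℝ)
    (hPadd : ∀ x y, P (x + y) ≤ P x + P y)
    (hPhom : ∀ (c : ℝ), 0 ≤ c → ∀ x, P (c • x) = c * P x)
    (u : Fin N → ℝ) (hfeas : ∃ x, ∀ i, Pc i x ≤ u i)
    (μ : ℝ) (hμ : IsGLB {r : ℝ | ∃ x, (∀ i, Pc i x ≤ u i) ∧ r = P x} μ) :
    ∃ lam : Fin N → ℝ, (∀ i, 0 ≤ lam i) ∧
      IsGLB {r : ℝ | ∃ x, r = P x + ∑ i, lam i * (Pc i x - u i)} μ := by
  classical
  choose s hs hrep using hpoly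
  obtain ⟨x₀, hx₀⟩ := hfeas
  have hle : ∀ i x, ∀ l ∈ s i, l x ≤ Pc i x := by
    intro i x l hl; rw [hrep i x]; exact Finset.le_sup' (fun l => l x) hl
  have hiff : ∀ i x r, Pc i x ≤ r ↔ ∀ l ∈ s i, l x ≤ r := by
    intro i x r; rw [hrep i x]; exact Finset.sup'_le_iff (hs i) _
  set κ := (Σ i : Fin N, {l // l ∈ s i}) ⊕ Unit with hκ
  set g : κ → (X × ℝ) →ₗ[ℝ] ℝ := fun j =>
    Sum.elim (fun p : Σ i : Fin N, {l // l ∈ s i} =>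
        ((p.2 : X →ₗ[ℝ] ℝ) ∘ₗ LinearMap.fst ℝ X ℝ) - u p.1 • LinearMap.snd ℝ X ℝ)
      (fun _ => -LinearMap.snd ℝ X ℝ) j with hg
  have hgapp : ∀ (p : Σ i : Fin N, {l // l ∈ s i}) (y : X × ℝ),
      g (Sum.inl p) y = (p.2 : X →ₗ[ℝ] ℝ) y.1 - u p.1 * y.2 := by
    intro p y; simp [hg]
  have hgapp2 : ∀ (y : X × ℝ), g (Sum.inr ()) y = -y.2 := by
    intro y; simp [hg]
  set Q : X × ℝ → ℝ := fun y => P y.1 - μ * y.2 with hQdef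
  have hQadd : ∀ y z : X × ℝ, Q (y + z) ≤ Q y + Q z := by
    intro y z
    have := hPadd y.1 z.1
    show P (y.1 + z.1) - μ * (y.2 + z.2) ≤ (P y.1 - μ * y.2) + (P z.1 - μ * z.2)
    linarith [hPadd y.1 z.1]
  have hQhom : ∀ c : ℝ, 0 ≤ c → ∀ y : X × ℝ, Q (c • y) = c * Q y := by
    intro c hc y
    show P (c • y.1) - μ * (c * y.2) = c * (P y.1 - μ * y.2)
    rw [hPhom c hc]; ring
  have hμlb : ∀ x, (∀ i, Pc i x ≤ u i) → μ ≤ P x := fun x hx => hμ.1 ⟨x, hx, rfl⟩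
  have hQC : ∀ y : X × ℝ, (∀ j, g j y ≤ 0) → 0 ≤ Q y := by
    intro y hy
    have ht : 0 ≤ y.2 := by
      have := hy (Sum.inr ()); rw [hgapp2] at this; linarith
    have hcon : ∀ (i : Fin N), ∀ l ∈ s i, l y.1 ≤ u i * y.2 := by
      intro i l hl
      have := hy (Sum.inl ⟨i, ⟨l, hl⟩⟩)
      rw [hgapp] at this
      simpa using by linarith
    rcases ht.eq_or_lt with ht0 | htpos
    · -- y.2 = 0
      show 0 ≤ P y.1 - μ * y.2
      rw [← ht0, mul_zero, sub_zero]
      have hly : ∀ (i : Fin N), ∀ l ∈ s i, l y.1 ≤ 0 := by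
        intro i l hl
        have := hcon i l hl
        rw [← ht0, mul_zero] at this
        exact this
      have hfeasn : ∀ n : ℕ, μ ≤ P x₀ + n * P y.1 := by
        intro n
        have hfeas' : ∀ i, Pc i (x₀ + (n : ℝ) • y.1) ≤ u i := by
          intro i
          rw [hiff]
          intro l hl
          rw [map_add, map_smul]
          have h1 : l x₀ ≤ Pc i x₀ := hle i x₀ l hl
          have h2 : (n : ℝ) • l y.1 ≤ 0 := by
            rw [smul_eq_mul]
            exact mul_nonpos_of_nonneg_of_nonpos (Nat.cast_nonneg n) (hly i l hl)
          have h3 := hx₀ i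
          linarith
        have h4 := hμlb _ hfeas'
        have h5 := hPadd x₀ ((n : ℝ) • y.1)
        rw [hPhom (n : ℝ) (Nat.cast_nonneg n)] at h5
        linarith
      by_contra hneg
      push_neg at hneg
      obtain ⟨n, hn⟩ := exists_nat_gt ((μ - P x₀) / P y.1)
      rw [div_lt_iff_of_neg hneg] at hn
      linarith [hfeasn n]
    · -- 0 < y.2
      set x' := y.2⁻¹ • y.1 with hx'
      have hfeas' : ∀ i, Pc i x' ≤ u i := by
        intro i
        rw [hiff]
        intro l hl
        rw [hx', map_smul, smul_eq_mul]
        have h1 := hcon i l hl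
        have h2 : y.2⁻¹ * l y.1 ≤ y.2⁻¹ * (u i * y.2) :=
          mul_le_mul_of_nonneg_left h1 (by positivity)
        rw [mul_comm (u i) y.2, ← mul_assoc, inv_mul_cancel₀ htpos.ne', one_mul] at h2
        exact h2
      have h4 := hμlb _ hfeas'
      have h5 : P y.1 = y.2 * P x' := by
        rw [hx', ← hPhom y.2 htpos.le, smul_smul, mul_inv_cancel₀ htpos.ne', one_smul]
      show 0 ≤ P y.1 - μ * y.2
      rw [h5]
      nlinarith
  obtain ⟨ν, hν, hkey⟩ := sublinear_polyhedral_nonneg g Q hQadd hQhom hQC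
  set lam : Fin N → ℝ := fun i => ∑ l : {l // l ∈ s i}, ν (Sum.inl ⟨i, l⟩) with hlamdef
  have hlam : ∀ i, 0 ≤ lam i := fun i => Finset.sum_nonneg (fun l _ => hν _)
  have hmain : ∀ x, μ ≤ P x + ∑ i, lam i * (Pc i x - u i) := by
    intro x
    have h0 := hkey (x, 1)
    rw [Fintype.sum_sum_type] at h0
    have hunit : ∑ j : Unit, ν (Sum.inr j) * g (Sum.inr j) (x, 1) = -ν (Sum.inr ()) := by
      rw [Fintype.sum_unique]
      rw [hgapp2]
      ring
    rw [hunit] at h0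
    have hQx : Q (x, 1) = P x - μ := by show P x - μ * 1 = P x - μ; ring
    rw [hQx] at h0
    have hsig : ∑ p : Σ i : Fin N, {l // l ∈ s i}, ν (Sum.inl p) * g (Sum.inl p) (x, 1)
        ≤ ∑ i, lam i * (Pc i x - u i) := by
      have e1 : ∑ p : Σ i : Fin N, {l // l ∈ s i}, ν (Sum.inl p) * g (Sum.inl p) (x, 1)
          ≤ ∑ p : Σ i : Fin N, {l // l ∈ s i}, ν (Sum.inl p) * (Pc p.1 x - u p.1) := by
        apply Finset.sum_le_sum
        intro p _
        rw [hgapp]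
        apply mul_le_mul_of_nonneg_left _ (hν _)
        have := hle p.1 x (p.2 : X →ₗ[ℝ] ℝ) p.2.2
        simp only [mul_one]
        linarith
      have e2 : ∑ p : Σ i : Fin N, {l // l ∈ s i}, ν (Sum.inl p) * (Pc p.1 x - u p.1)
          = ∑ i, lam i * (Pc i x - u i) := by
        rw [← Finset.univ_sigma_univ, Finset.sum_sigma]
        congr 1; funext i
        rw [hlamdef, Finset.sum_mul]
      linarith [e1, e2.symm.le]
    have hν0 := hν (Sum.inr ())
    linarith
  refine ⟨lam, hlam, ?_, ?_⟩
  · rintro r ⟨x, rfl⟩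
    exact hmain x
  · intro b hb
    apply hμ.2
    rintro r ⟨x, hx, rfl⟩
    have h1 : b ≤ P x + ∑ i, lam i * (Pc i x - u i) := hb ⟨x, rfl⟩
    have h2 : ∑ i, lam i * (Pc i x - u i) ≤ 0 :=
      Finset.sum_nonpos fun i _ =>
        mul_nonpos_of_nonneg_of_nonpos (hlam i) (by linarith [hx i])
    linarith
end
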